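/- arXiv:0912.2641 — 5 statements merged into one kernel-verified Lean document; each statement's English description precedes it below -/
import Mathlib

section
/- Let (v_n)_{n∈ℕ} be a bounded sequence of vectors in a real (or complex) Hilbert space H, and let (b_h)_{h∈ℕ} be a sequence of nonnegative reals such that: for every h ∈ ℕ and every sequence of intervals ([M_j, N_j))_{j∈ℕ} with N_j − M_j → ∞, one has limsup_{j→∞} | (1/(N_j − M_j)) Σ_{n=M_j}^{N_j−1} ⟨v_{n+h}, v_n⟩ | ≤ b_h. Suppose that lim_{H→∞} (1/H) Σ_{h=1}^{H} b_h = 0. Then for every sequence of intervals ([M_j, N_j))_{j∈ℕ} with N_j − M_j → ∞, the norms ‖ (1/(N_j − M_j)) Σ_{n=M_j}^{N_j−1} v_n ‖ converge to 0 as j → ∞. -/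
open Filter Topology Finset

section VDCAux

variable {𝕜 H : Type*} [RCLike 𝕜] [NormedAddCommGroup H] [InnerProductSpace 𝕜 H]

lemma vdc_sum_shift {α : Type*} [AddCommMonoid α] (f : ℕ → α) (M N h : ℕ) :
    ∑ n ∈ Finset.Ico (M + h) (N + h), f n = ∑ n ∈ Finset.Ico M N, f (n + h) := by
  rw [Finset.sum_Ico_eq_sum_range, Finset.sum_Ico_eq_sum_range, Nat.add_sub_add_right]
  exact Finset.sum_congr rfl fun k _ => by rw [show M + h + k = M + k + h by omega]

lemma vdc_avg_bound (v : ℕ → H) (C : ℝ) (hC : ∀ n, ‖v n‖ ≤ C) (d M' N' : ℕ) :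
    ‖(∑ n ∈ Finset.Ico M' N', (inner 𝕜 (v (n + d)) (v n) : 𝕜))‖ ≤ ((N' - M' : ℕ) : ℝ) * (C * C) := by
  have hC0 : 0 ≤ C := (norm_nonneg _).trans (hC 0)
  calc ‖(∑ n ∈ Finset.Ico M' N', (inner 𝕜 (v (n + d)) (v n) : 𝕜))‖
      ≤ ∑ n ∈ Finset.Ico M' N', ‖(inner 𝕜 (v (n + d)) (v n) : 𝕜)‖ := norm_sum_le _ _
    _ ≤ ∑ _n ∈ Finset.Ico M' N', C * C := by
        refine Finset.sum_le_sum fun n _ => (norm_inner_le_norm _ _).trans ?_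
        exact mul_le_mul (hC _) (hC _) (norm_nonneg _) hC0
    _ = ((N' - M' : ℕ) : ℝ) * (C * C) := by
        rw [Finset.sum_const, Nat.card_Ico, nsmul_eq_mul]

lemma vdc_div_bound (v : ℕ → H) (C : ℝ) (hC : ∀ n, ‖v n‖ ≤ C) (d M' N' : ℕ) :
    ‖(∑ n ∈ Finset.Ico M' N', (inner 𝕜 (v (n + d)) (v n) : 𝕜))‖ / ((N' - M' : ℕ) : ℝ) ≤ C * C := by
  have hC0 : 0 ≤ C := (norm_nonneg _).trans (hC 0)
  rcases Nat.eq_zero_or_pos (N' - M') with h | h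
  · have : Finset.Ico M' N' = ∅ := by
      rw [Finset.Ico_eq_empty_iff]; omega
    simp [this, h]
    positivity
  · rw [div_le_iff₀ (by exact_mod_cast h)]
    calc ‖(∑ n ∈ Finset.Ico M' N', (inner 𝕜 (v (n + d)) (v n) : 𝕜))‖
        ≤ ((N' - M' : ℕ) : ℝ) * (C * C) := vdc_avg_bound v C hC d M' N'
      _ = C * C * ((N' - M' : ℕ) : ℝ) := by ring

lemma vdc_uniform (v : ℕ → H) (C : ℝ) (hC : ∀ n, ‖v n‖ ≤ C) (b : ℕ → ℝ)
    (hbd : ∀ h : ℕ, ∀ M N : ℕ → ℕ, Tendsto (fun j => N j - M j) atTop atTop →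
      limsup (fun j =>
        ‖(∑ n ∈ Finset.Ico (M j) (N j), (inner 𝕜 (v (n + h)) (v n) : 𝕜))‖ /
          ((N j - M j : ℕ) : ℝ)) atTop ≤ b h)
    (d : ℕ) (ε : ℝ) (hε : 0 < ε) :
    ∃ L₀ : ℕ, ∀ M' N' : ℕ, L₀ ≤ N' - M' →
      ‖(∑ n ∈ Finset.Ico M' N', (inner 𝕜 (v (n + d)) (v n) : 𝕜))‖
        ≤ ((N' - M' : ℕ) : ℝ) * (b d + ε) := by
  have key : ∃ L₀ : ℕ, ∀ M' N' : ℕ, L₀ ≤ N' - M' →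
      ‖(∑ n ∈ Finset.Ico M' N', (inner 𝕜 (v (n + d)) (v n) : 𝕜))‖ / ((N' - M' : ℕ) : ℝ)
        ≤ b d + ε := by
    by_contra hcon
    push_neg at hcon
    choose M N h1 h2 using hcon
    have ht : Tendsto (fun j => N j - M j) atTop atTop :=
      tendsto_atTop_mono h1 tendsto_id
    have hls := hbd d M N ht
    have hlb : b d + ε ≤ limsup (fun j =>
        ‖(∑ n ∈ Finset.Ico (M j) (N j), (inner 𝕜 (v (n + d)) (v n) : 𝕜))‖ /
          ((N j - M j : ℕ) : ℝ)) atTop := by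
      refine le_limsup_of_frequently_le (Frequently.of_forall fun j => (h2 j).le) ?_
      exact isBoundedUnder_of ⟨C * C, fun j => vdc_div_bound v C hC d (M j) (N j)⟩
    linarith
  obtain ⟨L₀, hL₀⟩ := key
  refine ⟨max L₀ 1, fun M' N' h => ?_⟩
  have hpos : 0 < N' - M' := lt_of_lt_of_le (by omega) h
  have h' := hL₀ M' N' (le_trans (le_max_left _ _) h)
  rw [div_le_iff₀ (by exact_mod_cast hpos)] at h'
  linarith [h']

lemma vdc_b_nonneg (v : ℕ → H) (C : ℝ) (hC : ∀ n, ‖v n‖ ≤ C) (b : ℕ → ℝ)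
    (hbd : ∀ h : ℕ, ∀ M N : ℕ → ℕ, Tendsto (fun j => N j - M j) atTop atTop →
      limsup (fun j =>
        ‖(∑ n ∈ Finset.Ico (M j) (N j), (inner 𝕜 (v (n + h)) (v n) : 𝕜))‖ /
          ((N j - M j : ℕ) : ℝ)) atTop ≤ b h)
    (d : ℕ) : 0 ≤ b d := by
  have ht : Tendsto (fun j : ℕ => j - (fun _ : ℕ => 0) j) atTop atTop := by
    exact tendsto_id
  have hls := hbd d (fun _ => 0) (fun j => j) ht
  have hlb : (0 : ℝ) ≤ limsup (fun j =>
      ‖(∑ n ∈ Finset.Ico 0 j, (inner 𝕜 (v (n + d)) (v n) : 𝕜))‖ / ((j - 0 : ℕ) : ℝ)) atTop := by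
    refine le_limsup_of_frequently_le (Frequently.of_forall fun j => by positivity) ?_
    exact isBoundedUnder_of ⟨C * C, fun j => vdc_div_bound v C hC d 0 j⟩
  exact hlb.trans hls



end VDCAux

section Key
variable {𝕜 H : Type*} [RCLike 𝕜] [NormedAddCommGroup H] [InnerProductSpace 𝕜 H]

lemma vdc_key (v : ℕ → H) (C : ℝ) (hC : ∀ n, ‖v n‖ ≤ C) (b : ℕ → ℝ)
    (hb0 : ∀ d, 0 ≤ b d) (ε : ℝ) (hε : 0 ≤ ε) (K M N : ℕ) (hK : 1 ≤ K) (hKL : K ≤ N - M)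
    (hcorr : ∀ d < K, ∀ h' < K,
      ‖∑ n ∈ Finset.Ico (M + h') (N + h'), (inner 𝕜 (v (n + d)) (v n) : 𝕜)‖
        ≤ ((N - M : ℕ) : ℝ) * (b d + ε)) :
    ‖∑ n ∈ Finset.Ico M N, v n‖ ≤ 2 * K * C +
      ((N - M : ℕ) : ℝ) *
        Real.sqrt (ε + b 0 / K + 2 * (∑ d ∈ Finset.Icc 1 K, b d) / K) := by
  have hMN : M ≤ N := by omega
  have hC0 : 0 ≤ C := (norm_nonneg _).trans (hC 0)
  set Lr : ℝ := ((N - M : ℕ) : ℝ) with hLr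
  have hLr0 : 0 ≤ Lr := Nat.cast_nonneg _
  set S : ℝ := ∑ d ∈ Finset.Icc 1 K, b d with hS
  have hS0 : 0 ≤ S := Finset.sum_nonneg fun d _ => hb0 d
  set u : H := ∑ n ∈ Finset.Ico M N, v n with hu
  set w : ℕ → H := fun n => ∑ h ∈ Finset.range K, v (n + h) with hw
  have hKr : (0 : ℝ) < K := by exact_mod_cast hK
  -- norm of a short block
  have hblock : ∀ a h : ℕ, ‖∑ n ∈ Finset.Ico a (a + h), v n‖ ≤ h * C := by
    intro a h
    calc ‖∑ n ∈ Finset.Ico a (a + h), v n‖ ≤ ∑ n ∈ Finset.Ico a (a + h), ‖v n‖ :=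
          norm_sum_le _ _
      _ ≤ ∑ _n ∈ Finset.Ico a (a + h), C := Finset.sum_le_sum fun n _ => hC n
      _ = h * C := by rw [Finset.sum_const, Nat.card_Ico, Nat.add_sub_cancel_left, nsmul_eq_mul]
  -- Step A
  have hA : ∀ h < K, ‖(∑ n ∈ Finset.Ico M N, v (n + h)) - u‖ ≤ 2 * K * C := by
    intro h hh
    have h1 : M + h ≤ N := by omega
    have e1 : (∑ n ∈ Finset.Ico M N, v (n + h)) = ∑ n ∈ Finset.Ico (M + h) (N + h), v n :=
      (vdc_sum_shift v M N h).symm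
    have e2 : (∑ n ∈ Finset.Ico (M + h) (N + h), v n)
        = (∑ n ∈ Finset.Ico (M + h) N, v n) + ∑ n ∈ Finset.Ico N (N + h), v n :=
      (Finset.sum_Ico_consecutive _ h1 (by omega)).symm
    have e3 : u = (∑ n ∈ Finset.Ico M (M + h), v n) + ∑ n ∈ Finset.Ico (M + h) N, v n :=
      (Finset.sum_Ico_consecutive _ (by omega) h1).symm
    have ed : (∑ n ∈ Finset.Ico M N, v (n + h)) - u
        = (∑ n ∈ Finset.Ico N (N + h), v n) - ∑ n ∈ Finset.Ico M (M + h), v n := by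
      rw [e1, e2, e3]; abel
    rw [ed]
    calc ‖(∑ n ∈ Finset.Ico N (N + h), v n) - ∑ n ∈ Finset.Ico M (M + h), v n‖
        ≤ ‖∑ n ∈ Finset.Ico N (N + h), v n‖ + ‖∑ n ∈ Finset.Ico M (M + h), v n‖ :=
          norm_sub_le _ _
      _ ≤ h * C + h * C := add_le_add (hblock N h) (hblock M h)
      _ ≤ 2 * K * C := by
          have : (h : ℝ) ≤ K := by exact_mod_cast hh.le
          nlinarith
  -- Step B : K * ‖u‖ ≤ ‖T‖ + 2 K² C  where T = ∑_n w n
  set T : H := ∑ n ∈ Finset.Ico M N, w n with hT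
  have hTcomm : T = ∑ h ∈ Finset.range K, ∑ n ∈ Finset.Ico M N, v (n + h) :=
    Finset.sum_comm
  have hB : (K : ℝ) * ‖u‖ ≤ ‖T‖ + 2 * K * K * C := by
    have hdiff : ‖T - (K : ℕ) • u‖ ≤ (K : ℝ) * (2 * K * C) := by
      have e : T - (K : ℕ) • u
          = ∑ h ∈ Finset.range K, ((∑ n ∈ Finset.Ico M N, v (n + h)) - u) := by
        rw [Finset.sum_sub_distrib, ← hTcomm, Finset.sum_const, Finset.card_range]
      rw [e]
      calc ‖∑ h ∈ Finset.range K, ((∑ n ∈ Finset.Ico M N, v (n + h)) - u)‖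
          ≤ ∑ h ∈ Finset.range K, ‖(∑ n ∈ Finset.Ico M N, v (n + h)) - u‖ := norm_sum_le _ _
        _ ≤ ∑ _h ∈ Finset.range K, (2 * K * C) :=
            Finset.sum_le_sum fun h hh => hA h (Finset.mem_range.1 hh)
        _ = (K : ℝ) * (2 * K * C) := by rw [Finset.sum_const, Finset.card_range, nsmul_eq_mul]
    have hnsmul : ‖(K : ℕ) • u‖ = (K : ℝ) * ‖u‖ := by
      rw [RCLike.norm_nsmul 𝕜 K u, nsmul_eq_mul]
    have htri : ‖(K : ℕ) • u‖ - ‖T‖ ≤ ‖T - (K : ℕ) • u‖ := by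
      have := norm_sub_norm_le ((K : ℕ) • u) T
      rw [← norm_neg ((K:ℕ) • u - T), neg_sub] at this
      linarith
    rw [hnsmul] at htri
    nlinarith [hdiff, htri]
  -- pair correlation bound
  have hpair1 : ∀ h h' : ℕ, h < K → h' ≤ h →
      ‖∑ n ∈ Finset.Ico M N, (inner 𝕜 (v (n + h)) (v (n + h')) : 𝕜)‖ ≤ Lr * (b (h - h') + ε) := by
    intro h h' hh hh'
    have e : (∑ n ∈ Finset.Ico M N, (inner 𝕜 (v (n + h)) (v (n + h')) : 𝕜))
        = ∑ m ∈ Finset.Ico (M + h') (N + h'), (inner 𝕜 (v (m + (h - h'))) (v m) : 𝕜) := by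
      rw [vdc_sum_shift (fun m => (inner 𝕜 (v (m + (h - h'))) (v m) : 𝕜)) M N h']
      exact Finset.sum_congr rfl fun n _ => by rw [show n + h' + (h - h') = n + h by omega]
    rw [e]
    exact hcorr (h - h') (by omega) h' (by omega)
  have hpair : ∀ h < K, ∀ h' < K,
      ‖∑ n ∈ Finset.Ico M N, (inner 𝕜 (v (n + h)) (v (n + h')) : 𝕜)‖
        ≤ Lr * (b ((h - h') + (h' - h)) + ε) := by
    intro h hh h' hh'
    rcases le_or_gt h' h with hle | hlt
    · rw [show (h - h') + (h' - h) = h - h' by omega]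
      exact hpair1 h h' hh hle
    · rw [show (h - h') + (h' - h) = h' - h by omega]
      have e : (∑ n ∈ Finset.Ico M N, (inner 𝕜 (v (n + h)) (v (n + h')) : 𝕜))
          = (starRingEnd 𝕜) (∑ n ∈ Finset.Ico M N, (inner 𝕜 (v (n + h')) (v (n + h)) : 𝕜)) := by
        rw [map_sum]
        exact Finset.sum_congr rfl fun n _ => (inner_conj_symm _ _).symm
      rw [e, RCLike.norm_conj]
      exact hpair1 h' h hh' hlt.le
  -- row sum arithmetic
  have hsubS : ∀ m : ℕ, m ≤ K → ∑ i ∈ Finset.range m, b (i + 1) ≤ S := by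
    intro m hm
    have h1 : ∑ i ∈ Finset.range m, b (i + 1) ≤ ∑ i ∈ Finset.range K, b (i + 1) :=
      Finset.sum_le_sum_of_subset_of_nonneg (Finset.range_subset_range.2 hm) fun i _ _ => hb0 _
    have h2 : ∑ i ∈ Finset.range K, b (i + 1) = S := by
      rw [hS, show Finset.Icc 1 K = Finset.Ico 1 (K + 1) by rw [Finset.Ico_add_one_right_eq_Icc],
        Finset.sum_Ico_eq_sum_range]
      simp [add_comm]
    linarith
  have hrow : ∀ h < K, ∑ h' ∈ Finset.range K, b ((h - h') + (h' - h)) ≤ b 0 + 2 * S := by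
    intro h hh
    rw [Finset.range_eq_Ico, ← Finset.sum_Ico_consecutive _ (Nat.zero_le (h + 1)) (by omega : h + 1 ≤ K)]
    have e1 : ∑ h' ∈ Finset.Ico 0 (h + 1), b ((h - h') + (h' - h))
        = ∑ h' ∈ Finset.range (h + 1), b (h - h') := by
      rw [← Finset.range_eq_Ico]
      exact Finset.sum_congr rfl fun h' hh' => by
        rw [show (h - h') + (h' - h) = h - h' by
          have := Finset.mem_range.1 hh'; omega]
    have e1' : ∑ h' ∈ Finset.range (h + 1), b (h - h') = ∑ h' ∈ Finset.range (h + 1), b h' := by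
      have := Finset.sum_range_reflect b (h + 1)
      simpa using this
    have e1'' : ∑ h' ∈ Finset.range (h + 1), b h' = b 0 + ∑ i ∈ Finset.range h, b (i + 1) := by
      rw [Finset.sum_range_succ']; ring
    have e2 : ∑ h' ∈ Finset.Ico (h + 1) K, b ((h - h') + (h' - h))
        = ∑ i ∈ Finset.range (K - (h + 1)), b (i + 1) := by
      rw [Finset.sum_Ico_eq_sum_range]
      exact Finset.sum_congr rfl fun i _ => by
        rw [show (h - (h + 1 + i)) + ((h + 1 + i) - h) = i + 1 by omega]
    have b1 : ∑ h' ∈ Finset.Ico 0 (h + 1), b ((h - h') + (h' - h)) ≤ b 0 + S := by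
      rw [e1, e1', e1'']
      have := hsubS h (by omega)
      linarith
    have b2 : ∑ h' ∈ Finset.Ico (h + 1) K, b ((h - h') + (h' - h)) ≤ S := by
      rw [e2]; exact hsubS _ (by omega)
    linarith
  -- Step C : sum of ‖w n‖²
  have hwn : ∀ n : ℕ, (‖w n‖ : ℝ) ^ 2
      = RCLike.re (∑ h ∈ Finset.range K, ∑ h' ∈ Finset.range K,
          (inner 𝕜 (v (n + h)) (v (n + h')) : 𝕜)) := by
    intro n
    rw [← inner_self_eq_norm_sq (𝕜 := 𝕜) (w n)]
    congr 1
    rw [hw]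
    simp only [sum_inner, inner_sum]
    exact Finset.sum_comm
  have hsumw : ∑ n ∈ Finset.Ico M N, ‖w n‖ ^ 2 ≤ Lr * (K * (b 0 + 2 * S + K * ε)) := by
    have e : ∑ n ∈ Finset.Ico M N, ‖w n‖ ^ 2
        = ∑ h ∈ Finset.range K, ∑ h' ∈ Finset.range K,
            RCLike.re (∑ n ∈ Finset.Ico M N, (inner 𝕜 (v (n + h)) (v (n + h')) : 𝕜)) := by
      simp_rw [hwn, map_sum]
      rw [Finset.sum_comm]
      exact Finset.sum_congr rfl fun h _ => Finset.sum_comm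
    rw [e]
    have step : ∀ h ∈ Finset.range K, ∀ h' ∈ Finset.range K,
        RCLike.re (∑ n ∈ Finset.Ico M N, (inner 𝕜 (v (n + h)) (v (n + h')) : 𝕜))
          ≤ Lr * (b ((h - h') + (h' - h)) + ε) := by
      intro h hh h' hh'
      exact (RCLike.re_le_norm _).trans
        (hpair h (Finset.mem_range.1 hh) h' (Finset.mem_range.1 hh'))
    calc ∑ h ∈ Finset.range K, ∑ h' ∈ Finset.range K,
            RCLike.re (∑ n ∈ Finset.Ico M N, (inner 𝕜 (v (n + h)) (v (n + h')) : 𝕜))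
        ≤ ∑ h ∈ Finset.range K, ∑ h' ∈ Finset.range K, Lr * (b ((h - h') + (h' - h)) + ε) :=
          Finset.sum_le_sum fun h hh => Finset.sum_le_sum fun h' hh' => step h hh h' hh'
      _ ≤ ∑ _h ∈ Finset.range K, Lr * (b 0 + 2 * S + K * ε) := by
          refine Finset.sum_le_sum fun h hh => ?_
          have erow : ∑ h' ∈ Finset.range K, Lr * (b ((h - h') + (h' - h)) + ε)
              = Lr * ((∑ h' ∈ Finset.range K, b ((h - h') + (h' - h))) + K * ε) := by
            rw [← Finset.mul_sum, Finset.sum_add_distrib, Finset.sum_const,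
              Finset.card_range, nsmul_eq_mul]
          rw [erow]
          refine mul_le_mul_of_nonneg_left ?_ hLr0
          have := hrow h (Finset.mem_range.1 hh)
          linarith
      _ = Lr * (K * (b 0 + 2 * S + K * ε)) := by
          rw [Finset.sum_const, Finset.card_range, nsmul_eq_mul]; ring
  -- Step D
  set Q : ℝ := ε + b 0 / K + 2 * S / K with hQ
  have hQ0 : 0 ≤ Q := by
    have h1 : (0:ℝ) ≤ b 0 / K := div_nonneg (hb0 0) hKr.le
    have h2 : (0:ℝ) ≤ 2 * S / K := by positivity
    rw [hQ]; linarith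
  have hT2 : ‖T‖ ^ 2 ≤ (Lr * K) ^ 2 * Q := by
    have h1 : ‖T‖ ≤ ∑ n ∈ Finset.Ico M N, ‖w n‖ := norm_sum_le _ _
    have h2 : (∑ n ∈ Finset.Ico M N, ‖w n‖) ^ 2
        ≤ (Finset.Ico M N).card * ∑ n ∈ Finset.Ico M N, ‖w n‖ ^ 2 :=
      sq_sum_le_card_mul_sum_sq
    have hcard : (((Finset.Ico M N).card : ℕ) : ℝ) = Lr := by rw [Nat.card_Ico, hLr]
    have h3 : ‖T‖ ^ 2 ≤ (∑ n ∈ Finset.Ico M N, ‖w n‖) ^ 2 :=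
      pow_le_pow_left₀ (norm_nonneg _) h1 2
    have h4 : ((Finset.Ico M N).card : ℝ) * ∑ n ∈ Finset.Ico M N, ‖w n‖ ^ 2
        ≤ Lr * (Lr * (K * (b 0 + 2 * S + K * ε))) := by
      rw [hcard]
      exact mul_le_mul_of_nonneg_left hsumw hLr0
    have heq : Lr * (Lr * (K * (b 0 + 2 * S + K * ε))) = (Lr * K) ^ 2 * Q := by
      rw [hQ]; field_simp; ring
    calc ‖T‖ ^ 2 ≤ (∑ n ∈ Finset.Ico M N, ‖w n‖) ^ 2 := h3
      _ ≤ ((Finset.Ico M N).card : ℝ) * ∑ n ∈ Finset.Ico M N, ‖w n‖ ^ 2 := h2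
      _ ≤ Lr * (Lr * (K * (b 0 + 2 * S + K * ε))) := h4
      _ = (Lr * K) ^ 2 * Q := heq
  have hTle : ‖T‖ ≤ Lr * K * Real.sqrt Q := by
    have hs := Real.sqrt_le_sqrt hT2
    rw [Real.sqrt_sq (norm_nonneg T), Real.sqrt_mul (sq_nonneg _) Q,
      Real.sqrt_sq (by positivity : (0:ℝ) ≤ Lr * K)] at hs
    exact hs
  have hfin : (K : ℝ) * ‖u‖ ≤ (K : ℝ) * (2 * K * C + Lr * Real.sqrt Q) := by
    nlinarith [hB, hTle]
  exact le_of_mul_le_mul_left hfin hKr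


end Key

/-- **Van der Corput Lemma** (uniform-interval version). If for each `h` the correlation
averages along any sequence of intervals of lengths tending to infinity are bounded
above (in `limsup`) by `b h`, and the Cesàro averages of `b h` tend to `0`, then the
averages of `v n` over any such sequence of intervals tend to `0` in norm. -/
theorem van_der_corput_intervals
    {𝕜 H : Type*} [RCLike 𝕜] [NormedAddCommGroup H] [InnerProductSpace 𝕜 H]
    (v : ℕ → H) (hv : ∃ C : ℝ, ∀ n, ‖v n‖ ≤ C)
    (b : ℕ → ℝ)
    (hbd : ∀ h : ℕ, ∀ M N : ℕ → ℕ, Tendsto (fun j => N j - M j) atTop atTop →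
      limsup (fun j =>
        ‖(∑ n ∈ Finset.Ico (M j) (N j), (inner 𝕜 (v (n + h)) (v n) : 𝕜))‖ /
          ((N j - M j : ℕ) : ℝ)) atTop ≤ b h)
    (hb : Tendsto (fun H' : ℕ => (∑ h ∈ Finset.Icc 1 H', b h) / (H' : ℝ)) atTop (𝓝 0)) :
    ∀ M N : ℕ → ℕ, Tendsto (fun j => N j - M j) atTop atTop →
      Tendsto (fun j =>
        ‖((((N j - M j : ℕ) : ℝ) : 𝕜))⁻¹ • ∑ n ∈ Finset.Ico (M j) (N j), v n‖) atTop (𝓝 0) := by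
  obtain ⟨C, hC⟩ := hv
  have hC0 : 0 ≤ C := (norm_nonneg _).trans (hC 0)
  have hb0 : ∀ d, 0 ≤ b d := vdc_b_nonneg v C hC b hbd
  intro M N hMNt
  rw [Metric.tendsto_atTop]
  intro δ hδ
  have t1 : Tendsto (fun K : ℕ => b 0 / K + 2 * ((∑ h ∈ Finset.Icc 1 K, b h) / K))
      atTop (𝓝 0) := by
    have := (tendsto_const_div_atTop_nhds_zero_nat (b 0)).add (hb.const_mul 2)
    simpa using this
  obtain ⟨K, hKsm, hK1⟩ :=
    ((t1.eventually_lt_const (show (0:ℝ) < δ ^ 2 / 24 by positivity)).and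
      (eventually_ge_atTop 1)).exists
  set ε : ℝ := δ ^ 2 / 48 with hεdef
  have hεpos : 0 < ε := by positivity
  choose L0 hL0 using fun d => vdc_uniform (𝕜 := 𝕜) v C hC b hbd d ε hεpos
  set Lmax : ℕ := (Finset.range K).sup L0 with hLmaxdef
  set Lc : ℕ := ⌈8 * (K:ℝ) * C / δ⌉₊ + 1 with hLcdef
  obtain ⟨j₀, hj₀⟩ := eventually_atTop.1 (hMNt.eventually_ge_atTop (max (max Lmax K) Lc))
  refine ⟨j₀, fun j hj => ?_⟩
  have hL := hj₀ j hj
  have hLK : K ≤ N j - M j := le_trans (le_trans (le_max_right _ _) (le_max_left _ _)) hL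
  have hLmax : Lmax ≤ N j - M j := le_trans (le_trans (le_max_left _ _) (le_max_left _ _)) hL
  have hLc : Lc ≤ N j - M j := le_trans (le_max_right _ _) hL
  have hL1 : 1 ≤ N j - M j := le_trans (by omega) hLc
  have hLr0 : (0:ℝ) < ((N j - M j : ℕ) : ℝ) := by exact_mod_cast hL1
  have hcorr : ∀ d < K, ∀ h' < K,
      ‖∑ n ∈ Finset.Ico (M j + h') (N j + h'), (inner 𝕜 (v (n + d)) (v n) : 𝕜)‖
        ≤ ((N j - M j : ℕ) : ℝ) * (b d + ε) := by
    intro d hd h' _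
    have hge : L0 d ≤ (N j + h') - (M j + h') := by
      rw [Nat.add_sub_add_right]
      exact le_trans (Finset.le_sup (Finset.mem_range.2 hd)) hLmax
    have h1 := hL0 d (M j + h') (N j + h') hge
    rwa [Nat.add_sub_add_right] at h1
  have hkey := vdc_key v C hC b hb0 ε hεpos.le K (M j) (N j) hK1 hLK hcorr
  rw [Real.dist_eq, sub_zero, abs_of_nonneg (norm_nonneg _)]
  have hnorm : ‖((((N j - M j : ℕ) : ℝ) : 𝕜))⁻¹ • ∑ n ∈ Finset.Ico (M j) (N j), v n‖
      = ‖∑ n ∈ Finset.Ico (M j) (N j), v n‖ / ((N j - M j : ℕ) : ℝ) := by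
    rw [norm_smul, norm_inv, RCLike.norm_ofReal, abs_of_nonneg hLr0.le, inv_mul_eq_div]
  rw [hnorm]
  have hQle : ε + b 0 / K + 2 * (∑ d ∈ Finset.Icc 1 K, b d) / K ≤ (δ / 4) ^ 2 := by
    have h2 : b 0 / K + 2 * ((∑ h ∈ Finset.Icc 1 K, b h) / K) < δ ^ 2 / 24 := hKsm
    have h3 : 2 * (∑ d ∈ Finset.Icc 1 K, b d) / K
        = 2 * ((∑ d ∈ Finset.Icc 1 K, b d) / K) := by ring
    rw [h3, hεdef]
    nlinarith [h2]
  have hsq : Real.sqrt (ε + b 0 / K + 2 * (∑ d ∈ Finset.Icc 1 K, b d) / K) ≤ δ / 4 := by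
    have hs := Real.sqrt_le_sqrt hQle
    rwa [Real.sqrt_sq (by positivity : (0:ℝ) ≤ δ / 4)] at hs
  have hlin : 2 * (K:ℝ) * C / ((N j - M j : ℕ) : ℝ) ≤ δ / 4 := by
    rw [div_le_iff₀ hLr0]
    have h8 : 8 * (K:ℝ) * C / δ ≤ (Lc : ℝ) := by
      have hceil := Nat.le_ceil (8 * (K:ℝ) * C / δ)
      have : ((⌈8 * (K:ℝ) * C / δ⌉₊ : ℕ) : ℝ) ≤ (Lc : ℝ) := by
        rw [hLcdef]; push_cast; linarith
      linarith
    have h8' : 8 * (K:ℝ) * C ≤ δ * (Lc : ℝ) := by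
      rw [div_le_iff₀ hδ] at h8; linarith
    have hLcL : ((Lc : ℕ) : ℝ) ≤ ((N j - M j : ℕ) : ℝ) := by exact_mod_cast hLc
    nlinarith [hδ.le]
  have hKc0 : (0:ℝ) ≤ (K:ℝ) := Nat.cast_nonneg _
  calc ‖∑ n ∈ Finset.Ico (M j) (N j), v n‖ / ((N j - M j : ℕ) : ℝ)
      ≤ (2 * (K:ℝ) * C + ((N j - M j : ℕ) : ℝ) *
          Real.sqrt (ε + b 0 / K + 2 * (∑ d ∈ Finset.Icc 1 K, b d) / K))
            / ((N j - M j : ℕ) : ℝ) := by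
        exact (div_le_div_iff_of_pos_right hLr0).2 hkey
    _ = 2 * (K:ℝ) * C / ((N j - M j : ℕ) : ℝ)
          + Real.sqrt (ε + b 0 / K + 2 * (∑ d ∈ Finset.Icc 1 K, b d) / K) := by
        rw [add_div, mul_div_cancel_left₀ _ (ne_of_gt hLr0)]
    _ ≤ δ / 4 + δ / 4 := add_le_add hlin hsq
    _ < δ := by linarith
end

section
/- Let (v_{N,n})_{N,n∈ℕ} be a uniformly bounded doubly-indexed sequence of vectors in a real (or complex) Hilbert space H. For every h ∈ ℕ set b_h = limsup_{N→∞} | (1/N) Σ_{n=1}^{N} ⟨v_{N,n+h}, v_{N,n}⟩ |. Suppose lim_{H→∞} (1/H) Σ_{h=1}^{H} b_h = 0. Then lim_{N→∞} ‖ (1/N) Σ_{n=1}^{N} v_{N,n} ‖ = 0. -/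
open Filter Topology Finset

lemma vdc_shift {E : Type*} [SeminormedAddCommGroup E] (u : ℕ → E) (c : ℝ)
    (hc : ∀ n, ‖u n‖ ≤ c) (h N : ℕ) :
    ‖(∑ n ∈ Finset.Ioc 0 N, u (n + h)) - ∑ n ∈ Finset.Ioc 0 N, u n‖ ≤ 2 * h * c := by
  have reindex : (∑ n ∈ Finset.Ioc 0 N, u (n + h)) = ∑ m ∈ Finset.Ioc h (h + N), u m := by
    have : Finset.Ioc h (h + N) = Finset.map (addLeftEmbedding h) (Finset.Ioc 0 N) := by
      rw [Finset.map_add_left_Ioc]; simp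
    rw [this, Finset.sum_map]
    refine Finset.sum_congr rfl fun n _ => ?_
    simp [addLeftEmbedding, add_comm]
  have h1 : (∑ m ∈ Finset.Ioc 0 h, u m) + ∑ m ∈ Finset.Ioc h (h + N), u m
      = ∑ m ∈ Finset.Ioc 0 (h + N), u m :=
    Finset.sum_Ioc_consecutive _ (Nat.zero_le _) (Nat.le_add_right _ _)
  have h2 : (∑ m ∈ Finset.Ioc 0 N, u m) + ∑ m ∈ Finset.Ioc N (h + N), u m
      = ∑ m ∈ Finset.Ioc 0 (h + N), u m := by
    rw [Nat.add_comm h N]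
    exact Finset.sum_Ioc_consecutive _ (Nat.zero_le _) (Nat.le_add_right _ _)
  have key : (∑ n ∈ Finset.Ioc 0 N, u (n + h)) - ∑ n ∈ Finset.Ioc 0 N, u n
      = (∑ m ∈ Finset.Ioc N (h + N), u m) - ∑ m ∈ Finset.Ioc 0 h, u m := by
    rw [reindex, eq_sub_of_add_eq' h1, eq_sub_of_add_eq' h2]
    abel
  rw [key]
  have b1 : ‖∑ m ∈ Finset.Ioc N (h + N), u m‖ ≤ h * c := by
    calc ‖∑ m ∈ Finset.Ioc N (h + N), u m‖ ≤ ∑ m ∈ Finset.Ioc N (h + N), ‖u m‖ :=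
          norm_sum_le _ _
      _ ≤ (Finset.Ioc N (h + N)).card • c := Finset.sum_le_card_nsmul _ _ _ fun m _ => hc m
      _ = h * c := by rw [Nat.card_Ioc]; simp [nsmul_eq_mul]
  have b2 : ‖∑ m ∈ Finset.Ioc 0 h, u m‖ ≤ h * c := by
    calc ‖∑ m ∈ Finset.Ioc 0 h, u m‖ ≤ ∑ m ∈ Finset.Ioc 0 h, ‖u m‖ := norm_sum_le _ _
      _ ≤ (Finset.Ioc 0 h).card • c := Finset.sum_le_card_nsmul _ _ _ fun m _ => hc m
      _ = h * c := by rw [Nat.card_Ioc]; simp [nsmul_eq_mul]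
  calc ‖_ - _‖ ≤ _ + _ := norm_sub_le _ _
    _ ≤ h * c + h * c := add_le_add b1 b2
    _ = 2 * h * c := by ring

set_option maxHeartbeats 1000000 in
lemma vdc_key_s5 {𝕜 E : Type*} [RCLike 𝕜] [NormedAddCommGroup E] [InnerProductSpace 𝕜 E]
    (u : ℕ → E) (C : ℝ) (hC0 : 0 ≤ C) (hu : ∀ n, ‖u n‖ ≤ C) (Hh N : ℕ)
    (hH : 1 ≤ Hh) (hN : 1 ≤ N) :
    (‖∑ n ∈ Finset.Icc 1 N, u n‖ / N) ^ 2 ≤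
      2 * (C ^ 2 / Hh) + (4 / Hh) * (∑ j ∈ Finset.range (Hh - 1),
        ‖(∑ n ∈ Finset.Icc 1 N, (inner 𝕜 (u (n + (j + 1))) (u n) : 𝕜))‖ / N)
      + 8 * Hh * C ^ 2 / N + 8 * Hh ^ 2 * C ^ 2 / N ^ 2 := by
  have hIcc : ∀ M : ℕ, Finset.Icc 1 M = Finset.Ioc 0 M := by
    intro M; ext x; simp; omega
  simp only [hIcc]
  have hN' : (0:ℝ) < N := by exact_mod_cast hN
  have hH' : (0:ℝ) < Hh := by exact_mod_cast hH
  set M : E := ∑ n ∈ Finset.Ioc 0 N, u n with hM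
  set w : ℕ → E := fun n => ∑ h ∈ Finset.range Hh, u (n + h) with hw
  set W : E := ∑ n ∈ Finset.Ioc 0 N, w n with hW
  set G : ℕ → ℕ → ℝ :=
    fun h h' => ‖(∑ n ∈ Finset.Ioc 0 N, (inner 𝕜 (u (n + h)) (u (n + h')) : 𝕜))‖ with hG
  set a : ℕ → ℝ := fun d => ‖(∑ n ∈ Finset.Ioc 0 N, (inner 𝕜 (u (n + d)) (u n) : 𝕜))‖ with ha
  have ha0 : ∀ d, 0 ≤ a d := fun d => norm_nonneg _
  -- Step 1 : Hh * ‖M‖ ≤ ‖W‖ + 2 * Hh^2 * C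
  have step1 : (Hh : ℝ) * ‖M‖ ≤ ‖W‖ + 2 * Hh ^ 2 * C := by
    have hWc : W = ∑ h ∈ Finset.range Hh, ∑ n ∈ Finset.Ioc 0 N, u (n + h) := by
      rw [hW, Finset.sum_comm]
    have hsm : (Hh : ℝ) * ‖M‖ = ‖(Hh : ℕ) • M‖ := by
      rw [← Nat.cast_smul_eq_nsmul 𝕜, norm_smul, RCLike.norm_natCast]
    have hdiff : ‖(Hh : ℕ) • M - W‖ ≤ Hh * (2 * Hh * C) := by
      have : (Hh : ℕ) • M - W = ∑ h ∈ Finset.range Hh,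
          (M - ∑ n ∈ Finset.Ioc 0 N, u (n + h)) := by
        rw [Finset.sum_sub_distrib, Finset.sum_const, Finset.card_range, hWc]
      rw [this]
      calc ‖∑ h ∈ Finset.range Hh, (M - ∑ n ∈ Finset.Ioc 0 N, u (n + h))‖
          ≤ ∑ h ∈ Finset.range Hh, ‖M - ∑ n ∈ Finset.Ioc 0 N, u (n + h)‖ := norm_sum_le _ _
        _ ≤ ∑ h ∈ Finset.range Hh, (2 * Hh * C) := by
            refine Finset.sum_le_sum fun h hh => ?_
            rw [← norm_neg, neg_sub]
            refine (vdc_shift u C hu h N).trans ?_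
            have : (h : ℝ) ≤ Hh := by
              exact_mod_cast (Finset.mem_range.mp hh).le
            nlinarith
        _ = Hh * (2 * Hh * C) := by rw [Finset.sum_const, Finset.card_range, nsmul_eq_mul]
    calc (Hh : ℝ) * ‖M‖ = ‖(Hh : ℕ) • M‖ := hsm
      _ ≤ ‖W‖ + ‖(Hh : ℕ) • M - W‖ := by
          have := norm_add_le W ((Hh : ℕ) • M - W); simpa using this
      _ ≤ ‖W‖ + Hh * (2 * Hh * C) := by linarith
      _ = ‖W‖ + 2 * Hh ^ 2 * C := by ring
  -- Step 2 : ‖W‖^2 ≤ N * Σ ‖w n‖^2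
  have step2 : ‖W‖ ^ 2 ≤ N * ∑ n ∈ Finset.Ioc 0 N, ‖w n‖ ^ 2 := by
    calc ‖W‖ ^ 2 ≤ (∑ n ∈ Finset.Ioc 0 N, ‖w n‖) ^ 2 := by
          have := norm_sum_le (Finset.Ioc 0 N) w
          exact pow_le_pow_left₀ (norm_nonneg _) this 2
      _ ≤ (Finset.Ioc 0 N).card * ∑ n ∈ Finset.Ioc 0 N, ‖w n‖ ^ 2 :=
          sq_sum_le_card_mul_sum_sq
      _ = N * ∑ n ∈ Finset.Ioc 0 N, ‖w n‖ ^ 2 := by rw [Nat.card_Ioc]; simp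
  -- Step 3 : Σ ‖w n‖^2 ≤ Σ_h Σ_h' G h h'
  have step3 : ∑ n ∈ Finset.Ioc 0 N, ‖w n‖ ^ 2
      ≤ ∑ h ∈ Finset.range Hh, ∑ h' ∈ Finset.range Hh, G h h' := by
    have expand : ∀ n, ‖w n‖ ^ 2 = RCLike.re (∑ h ∈ Finset.range Hh,
        ∑ h' ∈ Finset.range Hh, (inner 𝕜 (u (n + h)) (u (n + h')) : 𝕜)) := by
      intro n
      rw [← inner_self_eq_norm_sq (𝕜 := 𝕜) (w n)]
      congr 1
      rw [hw]
      rw [sum_inner]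
      exact Finset.sum_congr rfl fun h _ => inner_sum _ _ _
    calc ∑ n ∈ Finset.Ioc 0 N, ‖w n‖ ^ 2
        = RCLike.re (∑ h ∈ Finset.range Hh, ∑ h' ∈ Finset.range Hh,
            ∑ n ∈ Finset.Ioc 0 N, (inner 𝕜 (u (n + h)) (u (n + h')) : 𝕜)) := by
          simp only [expand]
          rw [← map_sum]
          congr 1
          rw [Finset.sum_comm]
          refine Finset.sum_congr rfl fun h _ => Finset.sum_comm
      _ = ∑ h ∈ Finset.range Hh, ∑ h' ∈ Finset.range Hh,
            RCLike.re (∑ n ∈ Finset.Ioc 0 N, (inner 𝕜 (u (n + h)) (u (n + h')) : 𝕜)) := by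
          rw [map_sum]; exact Finset.sum_congr rfl fun h _ => map_sum _ _ _
      _ ≤ ∑ h ∈ Finset.range Hh, ∑ h' ∈ Finset.range Hh, G h h' := by
          refine Finset.sum_le_sum fun h _ => Finset.sum_le_sum fun h' _ => ?_
          exact RCLike.re_le_norm _
  -- bounds on G
  have g_diag : ∀ h, G h h ≤ N * C ^ 2 := by
    intro h
    calc G h h ≤ ∑ n ∈ Finset.Ioc 0 N, ‖(inner 𝕜 (u (n + h)) (u (n + h)) : 𝕜)‖ :=
        norm_sum_le _ _
      _ ≤ ∑ n ∈ Finset.Ioc 0 N, C ^ 2 := by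
          refine Finset.sum_le_sum fun n _ => ?_
          calc ‖(inner 𝕜 (u (n + h)) (u (n + h)) : 𝕜)‖ ≤ ‖u (n + h)‖ * ‖u (n + h)‖ :=
              norm_inner_le_norm _ _
            _ ≤ C * C := mul_le_mul (hu _) (hu _) (norm_nonneg _) hC0
            _ = C ^ 2 := (sq C).symm
      _ = N * C ^ 2 := by rw [Finset.sum_const, Nat.card_Ioc]; simp [nsmul_eq_mul]
  have g_off : ∀ h' h, h' < h → h' < Hh → G h h' ≤ a (h - h') + 2 * Hh * C ^ 2 := by
    intro h' h hlt hlt'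
    set c : ℕ → 𝕜 := fun m => (inner 𝕜 (u (m + (h - h'))) (u m) : 𝕜) with hc
    have hcb : ∀ m, ‖c m‖ ≤ C ^ 2 := by
      intro m
      calc ‖c m‖ ≤ ‖u (m + (h - h'))‖ * ‖u m‖ := norm_inner_le_norm _ _
        _ ≤ C * C := mul_le_mul (hu _) (hu _) (norm_nonneg _) hC0
        _ = C ^ 2 := (sq C).symm
    have heq : (∑ n ∈ Finset.Ioc 0 N, (inner 𝕜 (u (n + h)) (u (n + h')) : 𝕜))
        = ∑ n ∈ Finset.Ioc 0 N, c (n + h') := by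
      refine Finset.sum_congr rfl fun n _ => ?_
      rw [hc]
      congr 2
      omega
    have hshift := vdc_shift c (C ^ 2) hcb h' N
    have : G h h' ≤ ‖∑ n ∈ Finset.Ioc 0 N, c n‖ + 2 * h' * C ^ 2 := by
      rw [hG]
      simp only
      rw [heq]
      calc ‖∑ n ∈ Finset.Ioc 0 N, c (n + h')‖
          ≤ ‖∑ n ∈ Finset.Ioc 0 N, c n‖
            + ‖(∑ n ∈ Finset.Ioc 0 N, c (n + h')) - ∑ n ∈ Finset.Ioc 0 N, c n‖ := by
            have := norm_add_le (∑ n ∈ Finset.Ioc 0 N, c n)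
              ((∑ n ∈ Finset.Ioc 0 N, c (n + h')) - ∑ n ∈ Finset.Ioc 0 N, c n)
            simpa using this
        _ ≤ ‖∑ n ∈ Finset.Ioc 0 N, c n‖ + 2 * h' * C ^ 2 := by linarith
    refine this.trans ?_
    have hh' : (h' : ℝ) ≤ Hh := by exact_mod_cast hlt'.le
    have : (2 : ℝ) * h' * C ^ 2 ≤ 2 * Hh * C ^ 2 := by nlinarith [sq_nonneg C]
    simp only [ha]
    linarith
  have g_symm : ∀ h h', G h h' = G h' h := by
    intro h h'
    rw [hG]
    simp only
    have : (∑ n ∈ Finset.Ioc 0 N, (inner 𝕜 (u (n + h)) (u (n + h')) : 𝕜))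
        = (starRingEnd 𝕜) (∑ n ∈ Finset.Ioc 0 N, (inner 𝕜 (u (n + h')) (u (n + h)) : 𝕜)) := by
      rw [map_sum]
      exact Finset.sum_congr rfl fun n _ => (inner_conj_symm _ _).symm
    rw [this, RCLike.norm_conj]
  -- Step 5 : counting
  set K : ℝ := 2 * Hh * C ^ 2 with hK
  have step5 : ∑ h ∈ Finset.range Hh, ∑ h' ∈ Finset.range Hh, G h h'
      ≤ Hh * (N * C ^ 2 + 2 * ∑ j ∈ Finset.range (Hh - 1), (a (j + 1) + K)) := by
    have inner_bound : ∀ h ∈ Finset.range Hh, ∑ h' ∈ Finset.range Hh, G h h'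
        ≤ N * C ^ 2 + 2 * ∑ j ∈ Finset.range (Hh - 1), (a (j + 1) + K) := by
      intro h hh
      have hhH : h < Hh := Finset.mem_range.mp hh
      have hFnonneg : ∀ j, 0 ≤ a (j + 1) + K := by
        intro j
        have := ha0 (j + 1)
        have : (0:ℝ) ≤ K := by positivity
        positivity
      have split : ∑ h' ∈ Finset.range Hh, G h h'
          = (∑ h' ∈ Finset.range h, G h h') + G h h
            + ∑ h' ∈ Finset.Ico (h + 1) Hh, G h h' := by
        rw [Finset.range_eq_Ico, ← Finset.sum_Ico_consecutive _ (Nat.zero_le h) hhH.le,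
          Finset.sum_eq_sum_Ico_succ_bot hhH, ← Finset.range_eq_Ico]
        ring
      have S1 : ∑ h' ∈ Finset.range h, G h h'
          ≤ ∑ j ∈ Finset.range (Hh - 1), (a (j + 1) + K) := by
        calc ∑ h' ∈ Finset.range h, G h h' ≤ ∑ h' ∈ Finset.range h, (a (h - h') + K) := by
              refine Finset.sum_le_sum fun h' hh' => ?_
              have : h' < h := Finset.mem_range.mp hh'
              exact g_off h' h this (this.trans hhH)
          _ = ∑ j ∈ Finset.range h, (a (j + 1) + K) := by
              rw [← Finset.sum_range_reflect]
              refine Finset.sum_congr rfl fun j hj => ?_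
              have : j < h := Finset.mem_range.mp hj
              congr 2
              omega
          _ ≤ ∑ j ∈ Finset.range (Hh - 1), (a (j + 1) + K) := by
              refine Finset.sum_le_sum_of_subset_of_nonneg ?_ fun j _ _ => hFnonneg j
              exact Finset.range_subset_range.mpr (by omega)
      have S3 : ∑ h' ∈ Finset.Ico (h + 1) Hh, G h h'
          ≤ ∑ j ∈ Finset.range (Hh - 1), (a (j + 1) + K) := by
        calc ∑ h' ∈ Finset.Ico (h + 1) Hh, G h h'
            ≤ ∑ h' ∈ Finset.Ico (h + 1) Hh, (a (h' - h) + K) := by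
              refine Finset.sum_le_sum fun h' hh' => ?_
              have h1 : h < h' := by
                have := (Finset.mem_Ico.mp hh').1; omega
              rw [g_symm]
              exact g_off h h' h1 hhH
          _ = ∑ i ∈ Finset.range (Hh - (h + 1)), (a (i + 1) + K) := by
              rw [Finset.sum_Ico_eq_sum_range]
              refine Finset.sum_congr rfl fun i _ => ?_
              congr 2
              omega
          _ ≤ ∑ j ∈ Finset.range (Hh - 1), (a (j + 1) + K) := by
              refine Finset.sum_le_sum_of_subset_of_nonneg ?_ fun j _ _ => hFnonneg j
              exact Finset.range_subset_range.mpr (by omega)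
      rw [split]
      have := g_diag h
      linarith
    calc ∑ h ∈ Finset.range Hh, ∑ h' ∈ Finset.range Hh, G h h'
        ≤ ∑ h ∈ Finset.range Hh,
            (N * C ^ 2 + 2 * ∑ j ∈ Finset.range (Hh - 1), (a (j + 1) + K)) :=
          Finset.sum_le_sum inner_bound
      _ = Hh * (N * C ^ 2 + 2 * ∑ j ∈ Finset.range (Hh - 1), (a (j + 1) + K)) := by
          rw [Finset.sum_const, Finset.card_range, nsmul_eq_mul]
  -- assemble
  set P : ℝ := ∑ j ∈ Finset.range (Hh - 1), a (j + 1) with hP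
  have hP0 : 0 ≤ P := Finset.sum_nonneg fun j _ => ha0 _
  have hsum : ∑ j ∈ Finset.range (Hh - 1), (a (j + 1) + K) = P + (Hh - 1) * K := by
    rw [Finset.sum_add_distrib, Finset.sum_const, Finset.card_range, nsmul_eq_mul, hP]
    push_cast [Nat.cast_sub hH]
    ring
  have hW2 : ‖W‖ ^ 2 ≤ N * Hh * (N * C ^ 2 + 2 * P + 4 * Hh ^ 2 * C ^ 2) := by
    have c1 : ((Hh : ℝ) - 1) * K ≤ Hh * K := by
      have : (0:ℝ) ≤ K := by positivity
      nlinarith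
    have hKHh : (Hh : ℝ) * K = 2 * Hh ^ 2 * C ^ 2 := by rw [hK]; ring
    have hbig : ∑ h ∈ Finset.range Hh, ∑ h' ∈ Finset.range Hh, G h h'
        ≤ Hh * (N * C ^ 2 + 2 * P + 4 * Hh ^ 2 * C ^ 2) := by
      refine step5.trans ?_
      refine mul_le_mul_of_nonneg_left ?_ hH'.le
      have : ((Hh : ℝ) - 1) * K ≤ 2 * Hh ^ 2 * C ^ 2 := by rw [← hKHh]; exact c1
      rw [hsum]
      linarith
    calc ‖W‖ ^ 2 ≤ N * ∑ n ∈ Finset.Ioc 0 N, ‖w n‖ ^ 2 := step2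
      _ ≤ N * ∑ h ∈ Finset.range Hh, ∑ h' ∈ Finset.range Hh, G h h' :=
          mul_le_mul_of_nonneg_left step3 hN'.le
      _ ≤ N * (Hh * (N * C ^ 2 + 2 * P + 4 * Hh ^ 2 * C ^ 2)) :=
          mul_le_mul_of_nonneg_left hbig hN'.le
      _ = N * Hh * (N * C ^ 2 + 2 * P + 4 * Hh ^ 2 * C ^ 2) := by ring
  -- final real arithmetic
  have e1 : ‖M‖ / N ≤ ‖W‖ / (Hh * N) + 2 * Hh * C / N := by
    have hrw : ‖W‖ / (Hh * N) + 2 * Hh * C / N = (‖W‖ + 2 * Hh ^ 2 * C) / ((Hh : ℝ) * N) := by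
      field_simp
    rw [hrw, div_le_div_iff₀ hN' (by positivity)]
    nlinarith [mul_le_mul_of_nonneg_right step1 hN'.le]
  have e2 : (‖W‖ / (Hh * N)) ^ 2
      ≤ C ^ 2 / Hh + 2 * P / (Hh * N) + 4 * Hh * C ^ 2 / N := by
    rw [div_pow]
    rw [div_le_iff₀ (by positivity)]
    calc ‖W‖ ^ 2 ≤ N * Hh * (N * C ^ 2 + 2 * P + 4 * Hh ^ 2 * C ^ 2) := hW2
      _ = (C ^ 2 / Hh + 2 * P / (Hh * N) + 4 * Hh * C ^ 2 / N) * ((Hh : ℝ) * N) ^ 2 := by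
          field_simp
  have hPdiv : (∑ j ∈ Finset.range (Hh - 1),
      ‖(∑ n ∈ Finset.Ioc 0 N, (inner 𝕜 (u (n + (j + 1))) (u n) : 𝕜))‖ / (N:ℝ)) = P / N := by
    rw [hP, Finset.sum_div]
  rw [hPdiv]
  have key : (‖M‖ / N) ^ 2 ≤ 2 * (‖W‖ / (Hh * N)) ^ 2 + 2 * (2 * Hh * C / N) ^ 2 := by
    have h1 : 0 ≤ ‖M‖ / N := by positivity
    have h2 : 0 ≤ ‖W‖ / (Hh * N) := by positivity
    have h3 : 0 ≤ 2 * Hh * C / N := by positivity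
    have s1 : (‖M‖ / N) ^ 2 ≤ (‖W‖ / (Hh * N) + 2 * Hh * C / N) ^ 2 :=
      pow_le_pow_left₀ h1 e1 2
    nlinarith [s1, sq_nonneg (‖W‖ / (Hh * N) - 2 * Hh * C / N)]
  have final : 2 * (C ^ 2 / Hh + 2 * P / (Hh * N) + 4 * Hh * C ^ 2 / N)
      + 2 * (2 * Hh * C / N) ^ 2
      = 2 * (C ^ 2 / Hh) + (4 / Hh) * (P / N) + 8 * Hh * C ^ 2 / N
        + 8 * Hh ^ 2 * C ^ 2 / N ^ 2 := by
    field_simp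
    ring
  calc (‖M‖ / N) ^ 2 ≤ 2 * (‖W‖ / (Hh * N)) ^ 2 + 2 * (2 * Hh * C / N) ^ 2 := key
    _ ≤ 2 * (C ^ 2 / Hh + 2 * P / (Hh * N) + 4 * Hh * C ^ 2 / N)
        + 2 * (2 * Hh * C / N) ^ 2 := by nlinarith [e2]
    _ = _ := final


set_option maxHeartbeats 1000000 in
/-- **Lemma A.2.** Van der Corput lemma for doubly-indexed sequences: if the Cesàro
averages of `b h = limsup_N |(1/N) Σ_{n=1}^N ⟨v_{N,n+h}, v_{N,n}⟩|` tend to `0`,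
then `‖(1/N) Σ_{n=1}^N v_{N,n}‖ → 0`. -/
theorem van_der_corput_doubly_indexed
    {𝕜 H : Type*} [RCLike 𝕜] [NormedAddCommGroup H] [InnerProductSpace 𝕜 H]
    (v : ℕ → ℕ → H) (hv : ∃ C : ℝ, ∀ N n, ‖v N n‖ ≤ C)
    (hb : Tendsto (fun H' : ℕ =>
        (∑ h ∈ Finset.Icc 1 H',
          limsup (fun N : ℕ =>
            ‖(∑ n ∈ Finset.Icc 1 N, (inner 𝕜 (v N (n + h)) (v N n) : 𝕜))‖ / (N : ℝ)) atTop)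
          / (H' : ℝ)) atTop (𝓝 0)) :
    Tendsto (fun N : ℕ =>
      ‖(((N : ℝ) : 𝕜))⁻¹ • ∑ n ∈ Finset.Icc 1 N, v N n‖) atTop (𝓝 0) := by
  obtain ⟨C, hC⟩ := hv
  have hC0 : 0 ≤ C := le_trans (norm_nonneg _) (hC 0 0)
  set B : ℕ → ℝ := fun h => limsup (fun N : ℕ =>
    ‖(∑ n ∈ Finset.Icc 1 N, (inner 𝕜 (v N (n + h)) (v N n) : 𝕜))‖ / (N : ℝ)) atTop with hB
  have hfle : ∀ d N : ℕ,
      ‖(∑ n ∈ Finset.Icc 1 N, (inner 𝕜 (v N (n + d)) (v N n) : 𝕜))‖ / (N : ℝ) ≤ C ^ 2 := by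
    intro d N
    rcases Nat.eq_zero_or_pos N with h0 | h0
    · subst h0; simp; positivity
    · have hN' : (0:ℝ) < N := by exact_mod_cast h0
      rw [div_le_iff₀ hN']
      calc ‖(∑ n ∈ Finset.Icc 1 N, (inner 𝕜 (v N (n + d)) (v N n) : 𝕜))‖
          ≤ ∑ n ∈ Finset.Icc 1 N, ‖(inner 𝕜 (v N (n + d)) (v N n) : 𝕜)‖ := norm_sum_le _ _
        _ ≤ ∑ n ∈ Finset.Icc 1 N, C ^ 2 := by
            refine Finset.sum_le_sum fun n _ => ?_
            calc ‖(inner 𝕜 (v N (n + d)) (v N n) : 𝕜)‖ ≤ ‖v N (n + d)‖ * ‖v N n‖ :=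
                norm_inner_le_norm _ _
              _ ≤ C * C := mul_le_mul (hC _ _) (hC _ _) (norm_nonneg _) hC0
              _ = C ^ 2 := (sq C).symm
        _ = C ^ 2 * N := by
            rw [Finset.sum_const, Nat.card_Icc, nsmul_eq_mul]
            simp [mul_comm]
  have hbnd : ∀ d : ℕ, IsBoundedUnder (· ≤ ·) atTop (fun N : ℕ =>
      ‖(∑ n ∈ Finset.Icc 1 N, (inner 𝕜 (v N (n + d)) (v N n) : 𝕜))‖ / (N : ℝ)) :=
    fun d => isBoundedUnder_of ⟨C ^ 2, fun N => hfle d N⟩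
  have hB0 : ∀ d, 0 ≤ B d := fun d =>
    le_limsup_of_frequently_le (Frequently.of_forall fun N => by positivity) (hbnd d)
  rw [Metric.tendsto_atTop]
  intro ε hε
  set ε' : ℝ := ε / 2 with hε'
  have hε'0 : 0 < ε' := by positivity
  set δ : ℝ := ε' ^ 2 / 64 with hδ
  have hδ0 : 0 < δ := by positivity
  have ev1 : ∀ᶠ Hh : ℕ in atTop, C ^ 2 / (Hh : ℝ) < ε' ^ 2 / 16 :=
    (tendsto_const_div_atTop_nhds_zero_nat (C ^ 2)).eventually (gt_mem_nhds (by positivity))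
  have ev2 : ∀ᶠ Hh : ℕ in atTop,
      (∑ h ∈ Finset.Icc 1 Hh, B h) / (Hh : ℝ) < ε' ^ 2 / 64 :=
    hb.eventually (gt_mem_nhds (by positivity))
  obtain ⟨Hh, hH1, hHh2, hHh3⟩ := ((eventually_ge_atTop 1).and (ev1.and ev2)).exists
  have hH' : (0:ℝ) < Hh := by exact_mod_cast hH1
  -- eventual facts in N
  have evA : ∀ᶠ N : ℕ in atTop, ∀ j ∈ Finset.range (Hh - 1),
      ‖(∑ n ∈ Finset.Icc 1 N, (inner 𝕜 (v N (n + (j + 1))) (v N n) : 𝕜))‖ / (N : ℝ)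
        < B (j + 1) + δ := by
    rw [eventually_all_finset]
    intro j _
    refine eventually_lt_of_limsup_lt ?_ (hbnd (j + 1))
    have : B (j + 1) < B (j + 1) + δ := by linarith
    exact this
  have evB : ∀ᶠ N : ℕ in atTop, 8 * (Hh:ℝ) ^ 2 * C ^ 2 / (N : ℝ) < ε' ^ 2 / 4 :=
    (tendsto_const_div_atTop_nhds_zero_nat (8 * (Hh:ℝ) ^ 2 * C ^ 2)).eventually
      (gt_mem_nhds (by positivity))
  have evC : ∀ᶠ N : ℕ in atTop, 1 ≤ N := eventually_ge_atTop 1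
  have evAll := (evA.and (evB.and evC))
  rw [eventually_atTop] at evAll
  obtain ⟨N₀, hN₀⟩ := evAll
  refine ⟨N₀, fun N hN => ?_⟩
  obtain ⟨hA', hB', hN1⟩ := hN₀ N hN
  have hN' : (0:ℝ) < N := by exact_mod_cast hN1
  -- rewrite the norm
  have hnorm : ‖(((N : ℝ) : 𝕜))⁻¹ • ∑ n ∈ Finset.Icc 1 N, v N n‖
      = ‖∑ n ∈ Finset.Icc 1 N, v N n‖ / (N : ℝ) := by
    rw [norm_smul, norm_inv, RCLike.norm_ofReal, abs_of_nonneg (Nat.cast_nonneg N),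
      div_eq_inv_mul]
  rw [Real.dist_eq, sub_zero, abs_of_nonneg (norm_nonneg _), hnorm]
  -- key estimate
  have hkey := vdc_key_s5 (𝕜 := 𝕜) (v N) C hC0 (hC N) Hh N hH1 hN1
  set S : ℝ := ∑ j ∈ Finset.range (Hh - 1),
    ‖(∑ n ∈ Finset.Icc 1 N, (inner 𝕜 (v N (n + (j + 1))) (v N n) : 𝕜))‖ / (N : ℝ) with hS
  have hSbound : S ≤ (∑ h ∈ Finset.Icc 1 Hh, B h) + ((Hh:ℝ) - 1) * δ := by
    have step : S ≤ ∑ j ∈ Finset.range (Hh - 1), (B (j + 1) + δ) := by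
      refine Finset.sum_le_sum fun j hj => (hA' j hj).le
    refine step.trans ?_
    rw [Finset.sum_add_distrib, Finset.sum_const, Finset.card_range, nsmul_eq_mul]
    have h1 : ∑ j ∈ Finset.range (Hh - 1), B (j + 1) ≤ ∑ h ∈ Finset.Icc 1 Hh, B h := by
      have e2 : ∑ h ∈ Finset.Icc 1 Hh, B h = ∑ k ∈ Finset.range Hh, B (1 + k) := by
        have : Finset.Icc 1 Hh = Finset.Ico 1 (Hh + 1) := by
          ext x; simp
        rw [this, Finset.sum_Ico_eq_sum_range]
        simp
      rw [e2]
      have sub : Finset.range (Hh - 1) ⊆ Finset.range Hh := Finset.range_subset_range.mpr (by omega)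
      calc ∑ j ∈ Finset.range (Hh - 1), B (j + 1)
          = ∑ j ∈ Finset.range (Hh - 1), B (1 + j) := by
            refine Finset.sum_congr rfl fun j _ => by rw [add_comm]
        _ ≤ ∑ k ∈ Finset.range Hh, B (1 + k) :=
            Finset.sum_le_sum_of_subset_of_nonneg sub fun k _ _ => hB0 _
    have h2 : ((Hh - 1 : ℕ) : ℝ) * δ = ((Hh:ℝ) - 1) * δ := by
      push_cast [Nat.cast_sub hH1]
      ring
    linarith [h1, h2.le, h2.ge]
  -- assemble arithmetic
  have hfrac : ((Hh:ℝ) - 1) / Hh ≤ 1 := by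
    rw [div_le_one hH']; linarith
  have hterm2 : (4 / (Hh:ℝ)) * S ≤ ε' ^ 2 / 8 := by
    have h40 : (0:ℝ) ≤ 4 / (Hh:ℝ) := by positivity
    have step := mul_le_mul_of_nonneg_left hSbound h40
    have e : (4 / (Hh:ℝ)) * ((∑ h ∈ Finset.Icc 1 Hh, B h) + ((Hh:ℝ) - 1) * δ)
        = 4 * ((∑ h ∈ Finset.Icc 1 Hh, B h) / Hh) + 4 * δ * (((Hh:ℝ) - 1) / Hh) := by
      field_simp
    rw [e] at step
    have h4δ : 4 * δ * (((Hh:ℝ) - 1) / Hh) ≤ 4 * δ := by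
      nlinarith [hδ0.le]
    have : 4 * ((∑ h ∈ Finset.Icc 1 Hh, B h) / Hh) ≤ 4 * (ε' ^ 2 / 64) := by
      nlinarith [hHh3]
    rw [hδ] at *
    linarith
  have hH1' : (1:ℝ) ≤ Hh := by exact_mod_cast hH1
  have hN1' : (1:ℝ) ≤ N := by exact_mod_cast hN1
  have hterm3 : 8 * (Hh:ℝ) * C ^ 2 / N ≤ 8 * (Hh:ℝ) ^ 2 * C ^ 2 / N := by
    refine (div_le_div_iff_of_pos_right hN').mpr ?_
    have h1 : (Hh:ℝ) ≤ (Hh:ℝ) ^ 2 := by nlinarith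
    nlinarith [mul_le_mul_of_nonneg_right h1 (sq_nonneg C)]
  have hterm4 : 8 * (Hh:ℝ) ^ 2 * C ^ 2 / (N:ℝ) ^ 2 ≤ 8 * (Hh:ℝ) ^ 2 * C ^ 2 / N := by
    refine div_le_div_of_nonneg_left (by positivity) hN' ?_
    nlinarith
  have hsq : (‖∑ n ∈ Finset.Icc 1 N, v N n‖ / (N:ℝ)) ^ 2 ≤ ε' ^ 2 := by
    have t1 : 2 * (C ^ 2 / (Hh:ℝ)) ≤ ε' ^ 2 / 8 := by linarith
    have t3 : 8 * (Hh:ℝ) * C ^ 2 / N ≤ ε' ^ 2 / 4 := by linarith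
    have t4 : 8 * (Hh:ℝ) ^ 2 * C ^ 2 / (N:ℝ) ^ 2 ≤ ε' ^ 2 / 4 := by linarith
    calc (‖∑ n ∈ Finset.Icc 1 N, v N n‖ / (N:ℝ)) ^ 2
        ≤ 2 * (C ^ 2 / (Hh:ℝ)) + (4 / (Hh:ℝ)) * S + 8 * (Hh:ℝ) * C ^ 2 / N
          + 8 * (Hh:ℝ) ^ 2 * C ^ 2 / (N:ℝ) ^ 2 := hkey
      _ ≤ ε' ^ 2 / 8 + ε' ^ 2 / 8 + ε' ^ 2 / 4 + ε' ^ 2 / 4 := by linarith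
      _ ≤ ε' ^ 2 := by linarith [sq_nonneg ε']
  have hle : ‖∑ n ∈ Finset.Icc 1 N, v N n‖ / (N:ℝ) ≤ ε' :=
    le_of_pow_le_pow_left₀ two_ne_zero hε'0.le hsq
  calc ‖∑ n ∈ Finset.Icc 1 N, v N n‖ / (N:ℝ) ≤ ε' := hle
    _ < ε := by rw [hε']; linarith
end

section
/- Let ℓ ∈ ℕ, let (X, 𝒳, μ) be a probability space, let 𝒳₁, 𝒳₂, …, 𝒳_ℓ be sub-σ-algebras of 𝒳, and let f ∈ L^∞(μ) be nonnegative. Then ∫ f · E(f|𝒳₁) · E(f|𝒳₂) · … · E(f|𝒳_ℓ) dμ ≥ ( ∫ f dμ )^{ℓ+1}. -/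
open MeasureTheory
open scoped ENNReal NNReal

private lemma prod_rpow_aux {ι : Type*} (s : Finset ι) (f : ι → ℝ≥0∞) {p : ℝ} (hp : 0 ≤ p) :
    ∏ i ∈ s, f i ^ p = (∏ i ∈ s, f i) ^ p :=
  ENNReal.prod_rpow_of_nonneg hp

/-- If `f ≥ 0` is integrable, then `f` vanishes a.e. on the set where its conditional
expectation vanishes. -/
private lemma ae_zero_of_condexp_zero {X : Type*} {m : MeasurableSpace X}
    [m0 : MeasurableSpace X] {μ : Measure X} [IsFiniteMeasure μ] (hm : m ≤ m0) {f : X → ℝ}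
    (hfint : Integrable f μ) (hfnonneg : ∀ x, 0 ≤ f x) :
    ∀ᵐ x ∂μ, (μ[f|m]) x = 0 → f x = 0 := by
  have hs : MeasurableSet[m] {x | (μ[f|m]) x = 0} :=
    stronglyMeasurable_condExp.measurable (measurableSet_singleton 0)
  have hs0 : MeasurableSet {x | (μ[f|m]) x = 0} := hm _ hs
  have h1 : ∫ x in {x | (μ[f|m]) x = 0}, f x ∂μ = 0 := by
    rw [← setIntegral_condExp hm hfint hs]
    calc ∫ x in {x | (μ[f|m]) x = 0}, (μ[f|m]) x ∂μ
        = ∫ x in {x | (μ[f|m]) x = 0}, (0 : ℝ) ∂μ :=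
          setIntegral_congr_fun hs0 fun x hx => hx
      _ = 0 := by simp
  have h2 : f =ᵐ[μ.restrict {x | (μ[f|m]) x = 0}] 0 :=
    (integral_eq_zero_iff_of_nonneg hfnonneg hfint.restrict).mp h1
  have h2' : ∀ᵐ x ∂μ.restrict {x | (μ[f|m]) x = 0}, f x = 0 := h2
  rw [ae_restrict_iff' hs0] at h2'
  filter_upwards [h2'] with x hx hgx
  exact hx hgx

/-- Key estimate: `∫⁻ f / E(f|m) dμ ≤ 1` for nonnegative integrable `f`. -/
private lemma lintegral_mul_inv_condexp_le_one {X : Type*} {m : MeasurableSpace X}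
    [m0 : MeasurableSpace X] {μ : Measure X} [IsProbabilityMeasure μ] (hm : m ≤ m0) {f : X → ℝ}
    (hfmeas : Measurable f) (hfint : Integrable f μ) (hfnonneg : ∀ x, 0 ≤ f x) :
    ∫⁻ x, ENNReal.ofReal (f x) * (ENNReal.ofReal ((μ[f|m]) x))⁻¹ ∂μ ≤ 1 := by
  have hgsm : StronglyMeasurable[m] (μ[f|m]) := stronglyMeasurable_condExp
  have hgmeas : Measurable (μ[f|m]) := (hgsm.mono hm).measurable
  have hg0 : 0 ≤ᵐ[μ] μ[f|m] := condExp_nonneg (Filter.Eventually.of_forall hfnonneg)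
  have hzero := ae_zero_of_condexp_zero hm hfint hfnonneg
  set φ : ℕ → X → ℝ := fun n x => max 0 (min (n : ℝ) (((μ[f|m]) x)⁻¹)) with hφdef
  have hφnonneg : ∀ n x, 0 ≤ φ n x := fun n x => le_max_left _ _
  have hφle : ∀ n x, φ n x ≤ (n : ℝ) := fun n x =>
    max_le (Nat.cast_nonneg n) (min_le_left _ _)
  have hφm : ∀ n, Measurable[m] (φ n) := fun n =>
    measurable_const.max (measurable_const.min hgsm.measurable.inv)
  have key : ∀ n : ℕ, ∫⁻ x, ENNReal.ofReal (φ n x * f x) ∂μ ≤ 1 := by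
    intro n
    have hφsm0 : AEStronglyMeasurable (φ n) μ :=
      (((hφm n).mono hm le_rfl).stronglyMeasurable).aestronglyMeasurable
    have hφbd : ∀ᵐ x ∂μ, ‖φ n x‖ ≤ (n : ℝ) := Filter.Eventually.of_forall fun x => by
      rw [Real.norm_eq_abs, abs_of_nonneg (hφnonneg n x)]; exact hφle n x
    have hint1 : Integrable (φ n * f) μ := hfint.bdd_mul hφsm0 hφbd
    have hint2 : Integrable (fun x => φ n x * (μ[f|m]) x) μ :=
      integrable_condExp.bdd_mul hφsm0 hφbd
    have hpull : μ[φ n * f|m] =ᵐ[μ] φ n * μ[f|m] :=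
      condExp_mul_of_stronglyMeasurable_left ((hφm n).stronglyMeasurable) hint1 hfint
    have h3 : ∫ x, φ n x * f x ∂μ = ∫ x, φ n x * (μ[f|m]) x ∂μ := by
      calc ∫ x, φ n x * f x ∂μ = ∫ x, (φ n * f) x ∂μ := rfl
        _ = ∫ x, (μ[φ n * f|m]) x ∂μ := (integral_condExp hm).symm
        _ = ∫ x, (φ n * μ[f|m]) x ∂μ := integral_congr_ae hpull
        _ = ∫ x, φ n x * (μ[f|m]) x ∂μ := rfl
    have h4 : ∫ x, φ n x * (μ[f|m]) x ∂μ ≤ 1 := by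
      have hle : ∀ᵐ x ∂μ, φ n x * (μ[f|m]) x ≤ 1 := by
        filter_upwards [hg0] with x hgx
        rcases eq_or_lt_of_le hgx with h | h
        · simp [← h]
        · have h1 : φ n x ≤ ((μ[f|m]) x)⁻¹ :=
            max_le (inv_nonneg.2 hgx) (min_le_right _ _)
          calc φ n x * (μ[f|m]) x ≤ ((μ[f|m]) x)⁻¹ * (μ[f|m]) x :=
                mul_le_mul_of_nonneg_right h1 hgx
            _ = 1 := inv_mul_cancel₀ h.ne'
      calc ∫ x, φ n x * (μ[f|m]) x ∂μ ≤ ∫ _x, (1 : ℝ) ∂μ :=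
            integral_mono_ae hint2 (integrable_const 1) hle
        _ = 1 := by simp
    calc ∫⁻ x, ENNReal.ofReal (φ n x * f x) ∂μ
        = ENNReal.ofReal (∫ x, φ n x * f x ∂μ) :=
          (ofReal_integral_eq_lintegral_ofReal hint1
            (Filter.Eventually.of_forall fun x =>
              mul_nonneg (hφnonneg n x) (hfnonneg x))).symm
      _ ≤ ENNReal.ofReal 1 := ENNReal.ofReal_le_ofReal (h3 ▸ h4)
      _ = 1 := ENNReal.ofReal_one
  have hae : ∀ᵐ x ∂μ, (Monotone fun n : ℕ => ENNReal.ofReal (φ n x * f x)) ∧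
      ENNReal.ofReal (f x) * (ENNReal.ofReal ((μ[f|m]) x))⁻¹
        = ⨆ n : ℕ, ENNReal.ofReal (φ n x * f x) := by
    filter_upwards [hg0, hzero] with x hgx hfx
    have hmono : Monotone fun n : ℕ => ENNReal.ofReal (φ n x * f x) := by
      intro a b hab
      apply ENNReal.ofReal_le_ofReal
      exact mul_le_mul_of_nonneg_right
        (max_le_max le_rfl (min_le_min (Nat.cast_le.2 hab) le_rfl)) (hfnonneg x)
    refine ⟨hmono, ?_⟩
    rcases eq_or_lt_of_le hgx with h | h
    · have hf0 : f x = 0 := hfx h.symm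
      simp [hφdef, hf0]
    · have hinv : 0 ≤ ((μ[f|m]) x)⁻¹ := inv_nonneg.2 hgx
      have hφeq : ∀ n : ℕ, φ n x = min (n : ℝ) (((μ[f|m]) x)⁻¹) := fun n =>
        max_eq_right (le_min (Nat.cast_nonneg n) hinv)
      have hA : ENNReal.ofReal (f x) * (ENNReal.ofReal ((μ[f|m]) x))⁻¹
          = ENNReal.ofReal ((((μ[f|m]) x)⁻¹) * f x) := by
        rw [ENNReal.ofReal_mul hinv, ENNReal.ofReal_inv_of_pos h, mul_comm]
      rw [hA]
      apply le_antisymm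
      · have hn0 : φ ⌈((μ[f|m]) x)⁻¹⌉₊ x = ((μ[f|m]) x)⁻¹ := by
          rw [hφeq, min_eq_right (Nat.le_ceil _)]
        calc ENNReal.ofReal ((((μ[f|m]) x)⁻¹) * f x)
            = ENNReal.ofReal (φ ⌈((μ[f|m]) x)⁻¹⌉₊ x * f x) := by rw [hn0]
          _ ≤ ⨆ n : ℕ, ENNReal.ofReal (φ n x * f x) :=
              le_iSup (fun n : ℕ => ENNReal.ofReal (φ n x * f x)) _
      · exact iSup_le fun n => ENNReal.ofReal_le_ofReal
          (mul_le_mul_of_nonneg_right ((hφeq n).trans_le (min_le_right _ _)) (hfnonneg x))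
  calc ∫⁻ x, ENNReal.ofReal (f x) * (ENNReal.ofReal ((μ[f|m]) x))⁻¹ ∂μ
      = ∫⁻ x, ⨆ n : ℕ, ENNReal.ofReal (φ n x * f x) ∂μ :=
        lintegral_congr_ae (hae.mono fun x hx => hx.2)
    _ = ⨆ n : ℕ, ∫⁻ x, ENNReal.ofReal (φ n x * f x) ∂μ :=
        lintegral_iSup'
          (fun n => ((((hφm n).mono hm le_rfl).mul hfmeas).ennreal_ofReal).aemeasurable)
          (hae.mono fun x hx => hx.1)
    _ ≤ 1 := iSup_le key

/-- **Lemma 7.2 (Chu).** For a nonnegative bounded function `f` and sub-σ-algebras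
`𝒳₁, …, 𝒳_ℓ`, one has `∫ f · E(f|𝒳₁) ⋯ E(f|𝒳_ℓ) dμ ≥ (∫ f dμ)^{ℓ+1}`. -/
theorem integral_mul_prod_condexp_ge_pow
    {X : Type*} [m0 : MeasurableSpace X] (μ : Measure X) [IsProbabilityMeasure μ]
    (ℓ : ℕ) (m : Fin ℓ → MeasurableSpace X) (hm : ∀ i, m i ≤ m0)
    (f : X → ℝ) (hfmeas : Measurable f) (hfbdd : ∃ C : ℝ, ∀ x, |f x| ≤ C)
    (hfnonneg : ∀ x, 0 ≤ f x) :
    (∫ x, f x ∂μ) ^ (ℓ + 1) ≤ ∫ x, f x * ∏ i, (μ[f | m i]) x ∂μ := by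
  classical
  obtain ⟨C, hC⟩ := hfbdd
  set D : ℝ := max C 0 with hD
  have hD0 : 0 ≤ D := le_max_right _ _
  have hCD : ∀ x, |f x| ≤ D := fun x => (hC x).trans (le_max_left _ _)
  have hfint : Integrable f μ :=
    ⟨hfmeas.aestronglyMeasurable,
      HasFiniteIntegral.of_bounded (C := D)
        (Filter.Eventually.of_forall fun x => by
          simpa [Real.norm_eq_abs] using hCD x)⟩
  have hgsm : ∀ i, StronglyMeasurable[m i] (μ[f|m i]) := fun i => stronglyMeasurable_condExp
  have hgmeas : ∀ i, Measurable (μ[f|m i]) := fun i => ((hgsm i).mono (hm i)).measurable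
  have hgnn : ∀ i, 0 ≤ᵐ[μ] μ[f|m i] := fun i =>
    condExp_nonneg (Filter.Eventually.of_forall hfnonneg)
  have hgbd : ∀ i, ∀ᵐ x ∂μ, |(μ[f|m i]) x| ≤ D := fun i =>
    ae_bdd_condExp_of_ae_bdd (R := ⟨D, hD0⟩)
      (Filter.Eventually.of_forall fun x => hCD x)
  have haeAll : ∀ᵐ x ∂μ, ∀ i, 0 ≤ (μ[f|m i]) x ∧ |(μ[f|m i]) x| ≤ D := by
    rw [ae_all_iff]
    intro i
    filter_upwards [hgnn i, hgbd i] with x h1 h2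
    exact ⟨h1, h2⟩
  have hzero : ∀ᵐ x ∂μ, ∀ i, (μ[f|m i]) x = 0 → f x = 0 := by
    rw [ae_all_iff]
    exact fun i => ae_zero_of_condexp_zero (hm i) hfint hfnonneg
  have hprod_meas : Measurable fun x => f x * ∏ i, (μ[f|m i]) x :=
    hfmeas.mul (Finset.measurable_prod _ fun i _ => hgmeas i)
  have hprod_int : Integrable (fun x => f x * ∏ i, (μ[f|m i]) x) μ := by
    refine ⟨hprod_meas.aestronglyMeasurable,
      HasFiniteIntegral.of_bounded (C := D * D ^ ℓ) ?_⟩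
    filter_upwards [haeAll] with x hx
    rw [Real.norm_eq_abs, abs_mul]
    have h1 : |∏ i, (μ[f|m i]) x| ≤ D ^ ℓ := by
      rw [Finset.abs_prod]
      calc ∏ i, |(μ[f|m i]) x| ≤ ∏ _i : Fin ℓ, D :=
            Finset.prod_le_prod (fun i _ => abs_nonneg _) (fun i _ => (hx i).2)
        _ = D ^ ℓ := by simp
    exact mul_le_mul (hCD x) h1 (abs_nonneg _) hD0
  set F : X → ℝ≥0∞ := fun x => ENNReal.ofReal (f x) with hF
  set G : Fin ℓ → X → ℝ≥0∞ := fun i x => ENNReal.ofReal ((μ[f|m i]) x) with hG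
  have hFmeas : Measurable F := hfmeas.ennreal_ofReal
  have hGmeas : ∀ i, Measurable (G i) := fun i => (hgmeas i).ennreal_ofReal
  have hIeq : ENNReal.ofReal (∫ x, f x * ∏ i, (μ[f|m i]) x ∂μ)
      = ∫⁻ x, F x * ∏ i, G i x ∂μ := by
    rw [ofReal_integral_eq_lintegral_ofReal hprod_int
      (by filter_upwards [haeAll] with x hx
          exact mul_nonneg (hfnonneg x) (Finset.prod_nonneg fun i _ => (hx i).1))]
    refine lintegral_congr_ae ?_
    filter_upwards [haeAll] with x hx
    rw [ENNReal.ofReal_mul (hfnonneg x), ENNReal.ofReal_prod_of_nonneg fun i _ => (hx i).1]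
  have hceq : ENNReal.ofReal (∫ x, f x ∂μ) = ∫⁻ x, F x ∂μ :=
    ofReal_integral_eq_lintegral_ofReal hfint (Filter.Eventually.of_forall hfnonneg)
  set p : ℝ := ((ℓ : ℝ) + 1)⁻¹ with hp
  have hp0 : 0 < p := by positivity
  have hlp : ((ℓ : ℝ) + 1) * p = 1 := by
    rw [hp]
    field_simp
  set h : Option (Fin ℓ) → X → ℝ≥0∞ := fun o =>
    Option.elim o (fun x => F x * ∏ i, G i x) (fun j x => F x * (G j x)⁻¹) with hh
  have hhmeas : ∀ o ∈ Finset.univ, AEMeasurable (h o) μ := by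
    rintro (_ | j) -
    · exact (hFmeas.mul (Finset.measurable_prod _ fun i _ => hGmeas i)).aemeasurable
    · exact (hFmeas.mul (hGmeas j).inv).aemeasurable
  have hpsum : ∑ _o : Option (Fin ℓ), p = 1 := by
    rw [Finset.sum_const, Finset.card_univ, Fintype.card_option, Fintype.card_fin,
      nsmul_eq_mul]
    push_cast
    exact hlp
  have holder := ENNReal.lintegral_prod_norm_pow_le (μ := μ) Finset.univ hhmeas hpsum
    (fun o _ => hp0.le)
  have hLHS : ∫⁻ x, ∏ o, h o x ^ p ∂μ = ∫⁻ x, F x ∂μ := by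
    refine lintegral_congr_ae ?_
    filter_upwards [haeAll, hzero] with x hx hz
    by_cases hex : ∃ i, (μ[f|m i]) x = 0
    · obtain ⟨i0, hi0⟩ := hex
      have hfx : f x = 0 := hz i0 hi0
      have hFx : F x = 0 := by simp [hF, hfx]
      have hall : ∀ o, h o x = 0 := by
        rintro (_ | j) <;> simp [hh, hFx]
      calc ∏ o, h o x ^ p = ∏ _o : Option (Fin ℓ), (0 : ℝ≥0∞) ^ p :=
            Finset.prod_congr rfl fun o _ => by rw [hall o]
        _ = 0 := by rw [ENNReal.zero_rpow_of_pos hp0]; simp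
        _ = F x := hFx.symm
    · push_neg at hex
      have hGne : ∀ i, G i x ≠ 0 := fun i => by
        simp only [hG, ne_eq, ENNReal.ofReal_eq_zero, not_le]
        exact lt_of_le_of_ne (hx i).1 (Ne.symm (hex i))
      have hGtop : ∀ i, G i x ≠ ∞ := fun i => ENNReal.ofReal_ne_top
      have h1 : (∏ i, G i x) * ∏ i, (G i x)⁻¹ = 1 := by
        rw [← Finset.prod_mul_distrib, Finset.prod_eq_one]
        exact fun i _ => ENNReal.mul_inv_cancel (hGne i) (hGtop i)
      have hprod : ∏ o, h o x = F x ^ (ℓ + 1) := by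
        rw [Fintype.prod_option]
        calc (h none x) * ∏ j, h (some j) x
            = (F x * ∏ i, G i x) * ∏ j, (F x * (G j x)⁻¹) := rfl
          _ = (F x * ∏ i, G i x) * (F x ^ ℓ * ∏ j, (G j x)⁻¹) := by
              rw [Finset.prod_mul_distrib, Finset.prod_const, Finset.card_univ,
                Fintype.card_fin]
          _ = F x ^ (ℓ + 1) * ((∏ i, G i x) * ∏ j, (G j x)⁻¹) := by ring
          _ = F x ^ (ℓ + 1) := by rw [h1, mul_one]
      have hcast : ((ℓ + 1 : ℕ) : ℝ) * p = 1 := by push_cast; exact hlp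
      calc ∏ o, h o x ^ p = (∏ o, h o x) ^ p := prod_rpow_aux _ _ hp0.le
        _ = (F x ^ (ℓ + 1)) ^ p := by rw [hprod]
        _ = F x := by
            rw [← ENNReal.rpow_natCast (F x) (ℓ + 1), ← ENNReal.rpow_mul, hcast,
              ENNReal.rpow_one]
  have hRHS : ∏ o, (∫⁻ x, h o x ∂μ) ^ p ≤ (∫⁻ x, F x * ∏ i, G i x ∂μ) ^ p := by
    rw [Fintype.prod_option]
    have hone : ∀ j : Fin ℓ, (∫⁻ x, h (some j) x ∂μ) ^ p ≤ 1 := by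
      intro j
      have haux : ∫⁻ x, h (some j) x ∂μ ≤ 1 := by
        simp only [hh, hF, hG]
        exact lintegral_mul_inv_condexp_le_one (hm j) hfmeas hfint hfnonneg
      calc (∫⁻ x, h (some j) x ∂μ) ^ p ≤ (1 : ℝ≥0∞) ^ p :=
            ENNReal.rpow_le_rpow haux hp0.le
        _ = 1 := ENNReal.one_rpow p
    calc (∫⁻ x, h none x ∂μ) ^ p * ∏ j, (∫⁻ x, h (some j) x ∂μ) ^ p
        ≤ (∫⁻ x, h none x ∂μ) ^ p * 1 :=
          mul_le_mul_right (Finset.prod_le_one (fun j _ => zero_le) fun j _ => hone j) _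
      _ = (∫⁻ x, F x * ∏ i, G i x ∂μ) ^ p := by
          rw [mul_one]
          rfl
  have hmain : ∫⁻ x, F x ∂μ ≤ (∫⁻ x, F x * ∏ i, G i x ∂μ) ^ p :=
    hLHS ▸ (holder.trans hRHS)
  have hcast2 : p * ((ℓ + 1 : ℕ) : ℝ) = 1 := by push_cast; rw [mul_comm]; exact hlp
  have hcore : (∫⁻ x, F x ∂μ) ^ (ℓ + 1) ≤ ∫⁻ x, F x * ∏ i, G i x ∂μ := by
    calc (∫⁻ x, F x ∂μ) ^ (ℓ + 1)
        ≤ ((∫⁻ x, F x * ∏ i, G i x ∂μ) ^ p) ^ (ℓ + 1) := pow_le_pow_left' hmain _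
      _ = ∫⁻ x, F x * ∏ i, G i x ∂μ := by
          rw [← ENNReal.rpow_natCast ((∫⁻ x, F x * ∏ i, G i x ∂μ) ^ p) (ℓ + 1),
            ← ENNReal.rpow_mul, hcast2, ENNReal.rpow_one]
  have hIright : 0 ≤ ∫ x, f x * ∏ i, (μ[f|m i]) x ∂μ := by
    refine integral_nonneg_of_ae ?_
    filter_upwards [haeAll] with x hx
    exact mul_nonneg (hfnonneg x) (Finset.prod_nonneg fun i _ => (hx i).1)
  have hcnn : 0 ≤ ∫ x, f x ∂μ := integral_nonneg hfnonneg
  rw [← ENNReal.ofReal_le_ofReal_iff hIright, ENNReal.ofReal_pow hcnn, hceq, hIeq]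
  exact hcore
end

section
/- Let σ be a finite positive Borel measure on the circle 𝕋 = ℝ/ℤ such that σ({t}) = 0 for every rational point t ∈ 𝕋 (i.e., every point of the form q mod 1 with q ∈ ℚ), and let r ∈ ℚ. Then for every sequence of intervals ([M_j, N_j))_{j∈ℕ} of integers with N_j − M_j → ∞, one has lim_{j→∞} ∫_𝕋 | (1/(N_j − M_j)) Σ_{n=M_j}^{N_j−1} e(nt + r n²) |² dσ(t) = 0, where e(s) = e^{2πis}. -/
open MeasureTheory Filter Topology

private lemma circle_norm_one (z : Circle) : ‖(z : ℂ)‖ = 1 := by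
  simpa using z.norm_coe

private lemma phase_shift (r : ℚ) (t : AddCircle (1 : ℝ)) (n : ℤ) :
    (AddCircle.toCircle ((n + (r.den : ℤ)) • t +
        (((r : ℝ) * ((n + (r.den : ℤ) : ℤ) : ℝ) ^ 2 : ℝ) : AddCircle (1 : ℝ))) : ℂ)
      = (AddCircle.toCircle ((r.den : ℤ) • t) : ℂ) *
        (AddCircle.toCircle (n • t + (((r : ℝ) * (n : ℝ) ^ 2 : ℝ) : AddCircle (1 : ℝ))) : ℂ) := by
  rw [← Circle.coe_mul, ← AddCircle.toCircle_add]
  congr 1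
  have hden : (r : ℝ) * (r.den : ℝ) = (r.num : ℝ) := by
    have hd : ((r.den : ℝ)) ≠ 0 := Nat.cast_ne_zero.mpr r.den_nz
    rw [Rat.cast_def]; field_simp
  have hcoe : (((r : ℝ) * ((n + (r.den : ℤ) : ℤ) : ℝ) ^ 2 : ℝ) : AddCircle (1 : ℝ))
      = (((r : ℝ) * (n : ℝ) ^ 2 : ℝ) : AddCircle (1 : ℝ)) := by
    have hdiff : (r : ℝ) * ((n + (r.den : ℤ) : ℤ) : ℝ) ^ 2 - (r : ℝ) * (n : ℝ) ^ 2
        = ((2 * n * r.num + (r.den : ℤ) * r.num : ℤ) : ℝ) := by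
      push_cast
      linear_combination (2 * (n : ℝ) + (r.den : ℝ)) * hden
    have hz : ((((r : ℝ) * ((n + (r.den : ℤ) : ℤ) : ℝ) ^ 2 - (r : ℝ) * (n : ℝ) ^ 2 : ℝ)) :
        AddCircle (1 : ℝ)) = 0 := by
      rw [AddCircle.coe_eq_zero_iff]
      exact ⟨2 * n * r.num + (r.den : ℤ) * r.num, by rw [zsmul_eq_mul, mul_one, hdiff]⟩
    exact sub_eq_zero.mp (by rwa [AddCircle.coe_sub] at hz)
  rw [hcoe, add_zsmul]
  abel
  rfl

private lemma norm_sum_le_card_aux (g : ℤ → ℂ) (h : ∀ n, ‖g n‖ = 1) (a b : ℤ) :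
    ‖∑ n ∈ Finset.Ico a b, g n‖ ≤ (((b - a).toNat : ℕ) : ℝ) := by
  calc ‖∑ n ∈ Finset.Ico a b, g n‖ ≤ ∑ n ∈ Finset.Ico a b, ‖g n‖ := norm_sum_le _ _
    _ = (Finset.Ico a b).card := by simp [h]
    _ = (((b - a).toNat : ℕ) : ℝ) := by rw [Int.card_Ico]

private lemma sum_bound (r : ℚ) (t : AddCircle (1 : ℝ))
    (ht : ∀ q : ℚ, t ≠ (((q : ℝ)) : AddCircle (1 : ℝ))) :
    ∃ C : ℝ, 0 ≤ C ∧ ∀ M N : ℤ,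
      ‖∑ n ∈ Finset.Ico M N,
        (AddCircle.toCircle (n • t + (((r : ℝ) * (n : ℝ) ^ 2 : ℝ) : AddCircle (1 : ℝ))) : ℂ)‖
        ≤ C := by
  set d : ℤ := (r.den : ℤ) with hd
  have hd0 : 0 < d := Int.natCast_pos.mpr r.pos
  set g : ℤ → ℂ := fun n =>
    (AddCircle.toCircle (n • t + (((r : ℝ) * (n : ℝ) ^ 2 : ℝ) : AddCircle (1 : ℝ))) : ℂ) with hg
  set z : ℂ := (AddCircle.toCircle (d • t) : ℂ) with hz
  have hgnorm : ∀ n, ‖g n‖ = 1 := fun n => circle_norm_one _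
  have hshift : ∀ n, g (n + d) = z * g n := fun n => phase_shift r t n
  have hzne : (1 : ℂ) ≠ z := by
    intro h
    have h2 : AddCircle.toCircle (d • t) = AddCircle.toCircle (0 : AddCircle (1 : ℝ)) := by
      apply Subtype.ext
      rw [AddCircle.toCircle_zero, Circle.coe_one]
      exact h.symm
    have h3 := AddCircle.injective_toCircle (one_ne_zero) h2
    obtain ⟨x, rfl⟩ := QuotientAddGroup.mk_surjective t
    rw [← AddCircle.coe_zsmul, AddCircle.coe_eq_zero_iff] at h3
    obtain ⟨k, hk⟩ := h3
    apply ht ((k : ℚ) / (r.den : ℚ))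
    have hxk : x = (((k : ℚ) / (r.den : ℚ) : ℚ) : ℝ) := by
      rw [zsmul_eq_mul, mul_one, zsmul_eq_mul, hd] at hk
      have hdne : ((r.den : ℕ) : ℝ) ≠ 0 := Nat.cast_ne_zero.mpr r.den_nz
      push_cast at hk ⊢
      rw [eq_div_iff hdne]
      linear_combination -hk
    rw [hxk]
  have hz0 : (0 : ℝ) < ‖(1 : ℂ) - z‖ := by
    rw [norm_pos_iff]
    exact sub_ne_zero.mpr hzne
  refine ⟨2 * r.den / ‖(1 : ℂ) - z‖, by positivity, fun M N => ?_⟩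
  rcases le_or_gt N M with hNM | hMN
  · rw [Finset.Ico_eq_empty (by omega), Finset.sum_empty, norm_zero]
    positivity
  · rw [le_div_iff₀ hz0, ← norm_mul, mul_comm]
    have hmap : ∑ n ∈ Finset.Ico (M + d) (N + d), g n = ∑ n ∈ Finset.Ico M N, g (n + d) := by
      rw [← Finset.map_add_right_Ico, Finset.sum_map]; rfl
    have h1 : ∑ n ∈ Finset.Ico M N, g n + ∑ n ∈ Finset.Ico N (N + d), g n
        = ∑ n ∈ Finset.Ico M (N + d), g n := by
      rw [← Finset.sum_union (Finset.Ico_disjoint_Ico_consecutive M N (N + d)),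
        Finset.Ico_union_Ico_eq_Ico (le_of_lt hMN) (by omega)]
    have h2 : ∑ n ∈ Finset.Ico M (M + d), g n + ∑ n ∈ Finset.Ico (M + d) (N + d), g n
        = ∑ n ∈ Finset.Ico M (N + d), g n := by
      rw [← Finset.sum_union (Finset.Ico_disjoint_Ico_consecutive M (M + d) (N + d)),
        Finset.Ico_union_Ico_eq_Ico (by omega) (by omega)]
    have hzsum : ∑ n ∈ Finset.Ico M N, g (n + d) = z * ∑ n ∈ Finset.Ico M N, g n := by
      rw [Finset.mul_sum]
      exact Finset.sum_congr rfl fun n _ => hshift n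
    have key : ((1 : ℂ) - z) * ∑ n ∈ Finset.Ico M N, g n
        = ∑ n ∈ Finset.Ico M (M + d), g n - ∑ n ∈ Finset.Ico N (N + d), g n := by
      rw [sub_mul, one_mul, ← hzsum, ← hmap]
      linear_combination h1 - h2
    rw [key]
    calc ‖∑ n ∈ Finset.Ico M (M + d), g n - ∑ n ∈ Finset.Ico N (N + d), g n‖
        ≤ ‖∑ n ∈ Finset.Ico M (M + d), g n‖ + ‖∑ n ∈ Finset.Ico N (N + d), g n‖ :=
          norm_sub_le _ _
      _ ≤ (((M + d - M).toNat : ℕ) : ℝ) + (((N + d - N).toNat : ℕ) : ℝ) :=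
          add_le_add (norm_sum_le_card_aux g hgnorm _ _) (norm_sum_le_card_aux g hgnorm _ _)
      _ = 2 * r.den := by
          have : (M + d - M).toNat = r.den := by omega
          have h2' : (N + d - N).toNat = r.den := by omega
          rw [this, h2']; ring

/-- **Spectral estimate in the proof of Theorem A.3.** If `σ` is a finite positive Borel
measure on the circle `𝕋 = ℝ/ℤ` with no atoms at rational points, and `r ∈ ℚ`, then
`∫ |(1/(N-M)) Σ_{n=M}^{N-1} e(nt + rn²)|² dσ(t) → 0` along any sequence of intervals
whose lengths tend to infinity, where `e(s) = e^{2πis}`. -/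
theorem quadratic_weyl_sums_spectral_vanishing
    (σ : Measure (AddCircle (1 : ℝ))) [IsFiniteMeasure σ]
    (hσ : ∀ q : ℚ, σ {(((q : ℝ)) : AddCircle (1 : ℝ))} = 0)
    (r : ℚ)
    (M N : ℕ → ℤ) (hMN : Tendsto (fun j => N j - M j) atTop atTop) :
    Tendsto (fun j => ∫ t : AddCircle (1 : ℝ),
        ‖((((N j - M j : ℤ) : ℝ)) : ℂ)⁻¹ *
          ∑ n ∈ Finset.Ico (M j) (N j),
            (AddCircle.toCircle (n • t + (((r : ℝ) * (n : ℝ) ^ 2 : ℝ) : AddCircle (1 : ℝ))) : ℂ)‖ ^ 2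
        ∂σ) atTop (𝓝 0) := by
  set F : ℕ → AddCircle (1 : ℝ) → ℝ := fun j t =>
    ‖((((N j - M j : ℤ) : ℝ)) : ℂ)⁻¹ *
      ∑ n ∈ Finset.Ico (M j) (N j),
        (AddCircle.toCircle (n • t + (((r : ℝ) * (n : ℝ) ^ 2 : ℝ) : AddCircle (1 : ℝ))) : ℂ)‖ ^ 2
    with hF
  have hFnonneg : ∀ j t, 0 ≤ F j t := fun j t => by positivity
  -- measurability
  have hmeas : ∀ j, AEStronglyMeasurable (F j) σ := by
    intro j
    apply Continuous.aestronglyMeasurable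
    apply Continuous.pow
    apply Continuous.norm
    apply Continuous.mul continuous_const
    apply continuous_finset_sum
    intro n _
    exact continuous_subtype_val.comp (AddCircle.continuous_toCircle.comp
      ((continuous_zsmul n).add continuous_const))
  -- uniform bound by 1
  have hbound : ∀ j t, F j t ≤ 1 := by
    intro j t
    rcases le_or_gt (N j) (M j) with h | h
    · simp only [hF, Finset.Ico_eq_empty (not_lt.mpr h), Finset.sum_empty, mul_zero, norm_zero]
      norm_num
    · have hmul : ‖((((N j - M j : ℤ) : ℝ)) : ℂ)⁻¹ *
          ∑ n ∈ Finset.Ico (M j) (N j),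
            (AddCircle.toCircle (n • t + (((r : ℝ) * (n : ℝ) ^ 2 : ℝ) : AddCircle (1 : ℝ))) : ℂ)‖
          ≤ 1 := by
        rw [norm_mul, norm_inv, Complex.norm_real, Real.norm_eq_abs]
        have hS := norm_sum_le_card_aux
          (fun n => (AddCircle.toCircle
            (n • t + (((r : ℝ) * (n : ℝ) ^ 2 : ℝ) : AddCircle (1 : ℝ))) : ℂ))
          (fun n => circle_norm_one _) (M j) (N j)
        have hLpos : (0 : ℝ) < ((N j - M j : ℤ) : ℝ) := by exact_mod_cast sub_pos.mpr h
        have habs : |((N j - M j : ℤ) : ℝ)| = ((N j - M j : ℤ) : ℝ) := abs_of_pos hLpos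
        have hcast : (((N j - M j).toNat : ℕ) : ℝ) = ((N j - M j : ℤ) : ℝ) := by
          rw [← Int.cast_natCast]
          exact_mod_cast congrArg (Int.cast : ℤ → ℝ) (Int.toNat_of_nonneg (by omega))
        calc |((N j - M j : ℤ) : ℝ)|⁻¹ * ‖∑ n ∈ Finset.Ico (M j) (N j),
              (AddCircle.toCircle
                (n • t + (((r : ℝ) * (n : ℝ) ^ 2 : ℝ) : AddCircle (1 : ℝ))) : ℂ)‖
            ≤ |((N j - M j : ℤ) : ℝ)|⁻¹ * ((N j - M j : ℤ) : ℝ) := by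
              apply mul_le_mul_of_nonneg_left _ (by positivity)
              rw [← hcast]; exact hS
          _ = 1 := by rw [habs, inv_mul_cancel₀ (ne_of_gt hLpos)]
      calc F j t ≤ 1 ^ 2 := pow_le_pow_left₀ (norm_nonneg _) hmul 2
        _ = 1 := one_pow 2
  -- a.e. pointwise convergence
  have hae : ∀ᵐ t ∂σ, ∀ q : ℚ, t ≠ (((q : ℝ)) : AddCircle (1 : ℝ)) := by
    rw [ae_iff]
    have hset : {t : AddCircle (1 : ℝ) | ¬ ∀ q : ℚ, t ≠ (((q : ℝ)) : AddCircle (1 : ℝ))}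
        = ⋃ q : ℚ, {(((q : ℝ)) : AddCircle (1 : ℝ))} := by
      ext t
      simp [not_forall, eq_comm]
    rw [hset]
    exact measure_iUnion_null fun q => hσ q
  have hlim : ∀ᵐ t ∂σ, Tendsto (fun j => F j t) atTop (𝓝 0) := by
    filter_upwards [hae] with t ht
    obtain ⟨C, hC0, hC⟩ := sum_bound r t ht
    apply squeeze_zero_norm (a := fun j => (|((N j - M j : ℤ) : ℝ)|⁻¹ * C) ^ 2)
    · intro j
      rw [Real.norm_eq_abs, abs_of_nonneg (hFnonneg j t)]
      apply pow_le_pow_left₀ (norm_nonneg _)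
      rw [norm_mul, norm_inv, Complex.norm_real, Real.norm_eq_abs]
      exact mul_le_mul_of_nonneg_left (hC (M j) (N j)) (by positivity)
    · have h1 : Tendsto (fun j => ((N j - M j : ℤ) : ℝ)) atTop atTop :=
        tendsto_intCast_atTop_atTop.comp hMN
      have h2 : Tendsto (fun j => |((N j - M j : ℤ) : ℝ)|) atTop atTop :=
        tendsto_abs_atTop_atTop.comp h1
      have h3 : Tendsto (fun j => |((N j - M j : ℤ) : ℝ)|⁻¹ * C) atTop (𝓝 (0 * C)) :=
        ((tendsto_inv_atTop_zero.comp h2)).mul_const C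
      have h4 := h3.pow 2
      simpa only [zero_mul, zero_pow two_ne_zero] using h4
  have hmain := tendsto_integral_of_dominated_convergence (μ := σ) (F := F)
    (f := fun _ => (0 : ℝ)) (fun _ => (1 : ℝ)) hmeas (integrable_const 1)
    (fun j => Eventually.of_forall fun t => by
      rw [Real.norm_eq_abs, abs_of_nonneg (hFnonneg j t)]; exact hbound j t)
    hlim
  simpa only [integral_zero] using hmain
end

section
/- Let (𝒫, 𝒬) = ((p₁,q₁), …, (p_m,q_m)) be a nice ordered family of pairs of integer polynomials, containing no pair of constant polynomials, and suppose deg(p₁) ≥ 2. Then there exists a pair (p, q) ∈ (𝒫, 𝒬) such that for every sufficiently large h ∈ ℕ, the family (p,q,h)-vdC(𝒫,𝒬) is nice and has strictly smaller type than (𝒫, 𝒬). -/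
open Polynomial

/-- An ordered family of pairs of integer polynomials, as a list of pairs. -/
abbrev PolyPairFamily := List (Polynomial ℤ × Polynomial ℤ)

/-- The shift `S_h p = p(t + h)`. -/
noncomputable def polyShift (h : ℕ) (p : Polynomial ℤ) : Polynomial ℤ :=
  p.comp (Polynomial.X + Polynomial.C (h : ℤ))

/-- A pair of polynomials is constant when both entries are constant
(the degree of a constant polynomial, including `0`, is `0`). -/
def IsConstPair (pq : Polynomial ℤ × Polynomial ℤ) : Prop :=
  pq.1.natDegree = 0 ∧ pq.2.natDegree = 0

/-- The degree of the family: the maximum of the degrees of all its polynomials. -/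
noncomputable def famDegree (F : PolyPairFamily) : ℕ :=
  (F.map fun pq => max pq.1.natDegree pq.2.natDegree).foldr max 0

/-- `w₁ⱼ`: the number of equivalence classes (same degree and leading coefficient) of
polynomials of degree `j` in `𝒫`. -/
noncomputable def w1 (F : PolyPairFamily) (j : ℕ) : ℕ :=
  (((F.filter fun pq => pq.1.natDegree == j).map fun pq => pq.1.leadingCoeff).dedup).length

/-- `w₂ⱼ`: the number of equivalence classes of polynomials of degree `j` in
`𝒬' = {qᵢ : pᵢ constant}`. -/
noncomputable def w2 (F : PolyPairFamily) (j : ℕ) : ℕ :=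
  (((F.filter fun pq => pq.1.natDegree == 0 && pq.2.natDegree == j).map
      fun pq => pq.2.leadingCoeff).dedup).length

/-- The type of the family relative to degree `d`, flattened to the list
`[w₁_d, …, w₁_1, w₂_d, …, w₂_1]`; types are compared lexicographically. -/
noncomputable def typeList (d : ℕ) (F : PolyPairFamily) : List ℕ :=
  ((List.range d).map fun k => w1 F (d - k)) ++ ((List.range d).map fun k => w2 F (d - k))

/-- A family `((p₁,q₁),…,(p_m,q_m))` is *nice* if (1) `deg p₁ ≥ deg pᵢ` for all `i`;
(2) `deg p₁ > deg qᵢ` for all `i`; (3) `deg (p₁ - pᵢ) > deg (q₁ - qᵢ)` for `i ≥ 2`. -/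
def NiceFamily (F : PolyPairFamily) : Prop :=
  ∃ p₁ q₁ rest, F = (p₁, q₁) :: rest ∧
    (∀ pq ∈ F, pq.1.natDegree ≤ p₁.natDegree) ∧
    (∀ pq ∈ F, pq.2.natDegree < p₁.natDegree) ∧
    (∀ pq ∈ rest, (q₁ - pq.2).natDegree < (p₁ - pq.1).natDegree)

/-- The van der Corput operation `(p,q,h)-vdC(𝒫,𝒬)`: form the shifted-and-translated
family and remove all pairs of constant polynomials. -/
noncomputable def vdcOp (p q : Polynomial ℤ) (h : ℕ) (F : PolyPairFamily) : PolyPairFamily :=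
  ((F.map fun pq => (polyShift h pq.1 - p, polyShift h pq.2 - q)) ++
      (F.map fun pq => (pq.1 - p, pq.2 - q))).filter
    fun pq => !(pq.1.natDegree == 0 && pq.2.natDegree == 0)

lemma polyShift_eq (h : ℕ) (p : ℤ[X]) : polyShift h p = taylor (h : ℤ) p :=
  (taylor_apply _ _).symm

lemma foldr_max_le (l : List ℕ) (n : ℕ) : l.foldr max 0 ≤ n ↔ ∀ x ∈ l, x ≤ n := by
  induction l with
  | nil => simp
  | cons a t ih => simp [ih, Nat.max_le]

lemma le_foldr_max (l : List ℕ) (x : ℕ) (hx : x ∈ l) : x ≤ l.foldr max 0 := by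
  induction l with
  | nil => simp at hx
  | cons a t ih =>
    rcases List.mem_cons.mp hx with rfl | h
    · exact le_max_left _ _
    · exact le_trans (ih h) (le_max_right _ _)

lemma famDegree_le (F : PolyPairFamily) (n : ℕ)
    (h : ∀ pq ∈ F, pq.1.natDegree ≤ n ∧ pq.2.natDegree ≤ n) : famDegree F ≤ n := by
  rw [famDegree, foldr_max_le]
  intro x hx
  obtain ⟨pq, hpq, rfl⟩ := List.mem_map.mp hx
  exact max_le (h pq hpq).1 (h pq hpq).2

lemma le_famDegree (F : PolyPairFamily) (pq : Polynomial ℤ × Polynomial ℤ) (h : pq ∈ F) :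
    pq.1.natDegree ≤ famDegree F ∧ pq.2.natDegree ≤ famDegree F := by
  have := le_foldr_max (F.map fun pq => max pq.1.natDegree pq.2.natDegree)
    (max pq.1.natDegree pq.2.natDegree) (List.mem_map.mpr ⟨pq, h, rfl⟩)
  rw [← famDegree] at this
  exact ⟨le_trans (le_max_left _ _) this, le_trans (le_max_right _ _) this⟩

noncomputable def A1 (F : PolyPairFamily) (j : ℕ) : Finset ℤ :=
  ((F.filter fun pq => pq.1.natDegree == j).map fun pq => pq.1.leadingCoeff).toFinset

noncomputable def A2 (F : PolyPairFamily) (j : ℕ) : Finset ℤ :=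
  ((F.filter fun pq => pq.1.natDegree == 0 && pq.2.natDegree == j).map
      fun pq => pq.2.leadingCoeff).toFinset

lemma w1_eq_card (F : PolyPairFamily) (j : ℕ) : w1 F j = (A1 F j).card := by
  rw [w1, A1, List.card_toFinset]

lemma w2_eq_card (F : PolyPairFamily) (j : ℕ) : w2 F j = (A2 F j).card := by
  rw [w2, A2, List.card_toFinset]

lemma mem_A1 (F : PolyPairFamily) (j : ℕ) (x : ℤ) :
    x ∈ A1 F j ↔ ∃ pq ∈ F, pq.1.natDegree = j ∧ pq.1.leadingCoeff = x := by
  simp [A1, List.mem_filter, and_assoc]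

lemma mem_A2 (F : PolyPairFamily) (j : ℕ) (x : ℤ) :
    x ∈ A2 F j ↔ ∃ pq ∈ F, pq.1.natDegree = 0 ∧ pq.2.natDegree = j ∧ pq.2.leadingCoeff = x := by
  simp [A2, List.mem_filter, and_assoc]

lemma mem_vdcOp (p q : ℤ[X]) (h : ℕ) (F : PolyPairFamily)
    (x : Polynomial ℤ × Polynomial ℤ) :
    x ∈ vdcOp p q h F ↔
      (∃ pq ∈ F, x = (taylor (h : ℤ) pq.1 - p, taylor (h : ℤ) pq.2 - q) ∨
        x = (pq.1 - p, pq.2 - q)) ∧ ¬(x.1.natDegree = 0 ∧ x.2.natDegree = 0) := by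
  constructor
  · intro hx
    rw [vdcOp, List.mem_filter] at hx
    obtain ⟨hmem, hfil⟩ := hx
    have h2 : ¬x.1.natDegree = 0 ∨ ¬x.2.natDegree = 0 := by simpa using hfil
    refine ⟨?_, by tauto⟩
    rcases List.mem_append.mp hmem with hm | hm
    · obtain ⟨pq, hpq, rfl⟩ := List.mem_map.mp hm
      exact ⟨pq, hpq, Or.inl (by rw [polyShift_eq, polyShift_eq])⟩
    · obtain ⟨pq, hpq, rfl⟩ := List.mem_map.mp hm
      exact ⟨pq, hpq, Or.inr rfl⟩
  · rintro ⟨⟨pq, hpq, hor⟩, hnc⟩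
    rw [vdcOp, List.mem_filter]
    have h2 : ¬x.1.natDegree = 0 ∨ ¬x.2.natDegree = 0 := by tauto
    refine ⟨?_, ?_⟩
    swap
    · rcases h2 with h2 | h2 <;> simp [h2]
    rcases hor with rfl | rfl
    · exact List.mem_append.mpr (Or.inl (List.mem_map.mpr
        ⟨pq, hpq, by rw [polyShift_eq, polyShift_eq]⟩))
    · exact List.mem_append.mpr (Or.inr (List.mem_map.mpr ⟨pq, hpq, rfl⟩))

lemma coeff_taylor_of_le (f : ℤ[X]) (r : ℤ) (m : ℕ) (hm : f.natDegree ≤ m) :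
    (taylor r f).coeff m = f.coeff m := by
  rcases eq_or_lt_of_le hm with h | h
  · have hdeg : (taylor r f).natDegree = f.natDegree := natDegree_taylor f r
    have hlc : (taylor r f).leadingCoeff = f.leadingCoeff := by
      rw [taylor_apply, leadingCoeff_comp (by rw [natDegree_X_add_C]; exact one_ne_zero),
        leadingCoeff_X_add_C, one_pow, mul_one]
    rw [← h, ← hdeg, coeff_natDegree, hlc, ← coeff_natDegree (p := f), hdeg]
  · rw [coeff_eq_zero_of_natDegree_lt (by rwa [natDegree_taylor]),
      coeff_eq_zero_of_natDegree_lt h]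

lemma coeff_taylor_pred (p : ℤ[X]) (r : ℤ) (hd : 1 ≤ p.natDegree) :
    (taylor r p).coeff (p.natDegree - 1) =
      p.coeff (p.natDegree - 1) + (p.natDegree : ℤ) * p.leadingCoeff * r := by
  set d := p.natDegree with hdd
  have h1 : (taylor r p).coeff (d - 1) = (hasseDeriv (d-1) p).eval r := taylor_coeff r p (d-1)
  have hle : (hasseDeriv (d-1) p).natDegree < 2 := by
    have := natDegree_hasseDeriv_le p (d-1)
    omega
  rw [h1, eval_eq_sum_range' hle r]
  rw [Finset.sum_range_succ, Finset.sum_range_one]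
  rw [hasseDeriv_coeff, hasseDeriv_coeff]
  have h2 : 1 + (d - 1) = d := by omega
  have h3 : (0 + (d-1)).choose (d-1) = 1 := by simp
  have h4 : d.choose (d-1) = d := by
    obtain ⟨k, hk⟩ : ∃ k, d = k + 1 := ⟨d - 1, by omega⟩
    rw [hk, show k + 1 - 1 = k from rfl, Nat.choose_succ_self_right]
  rw [h2, h3, h4]
  have : p.coeff d = p.leadingCoeff := coeff_natDegree
  rw [Nat.zero_add, this]
  push_cast
  ring

lemma natDegree_sub_lc (u v : ℤ[X]) (h : v.natDegree < u.natDegree) :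
    (u - v).natDegree = u.natDegree ∧ (u - v).leadingCoeff = u.leadingCoeff := by
  have hd := natDegree_sub_eq_left_of_natDegree_lt h
  refine ⟨hd, ?_⟩
  rw [← coeff_natDegree (p := u - v), hd, coeff_sub, coeff_eq_zero_of_natDegree_lt h,
    sub_zero, coeff_natDegree]

lemma natDegree_le_pred' (f : ℤ[X]) (n : ℕ) (hle : f.natDegree ≤ n) (h0 : f.coeff n = 0) :
    f.natDegree ≤ n - 1 := by
  rw [natDegree_le_iff_coeff_eq_zero]
  intro N hN
  rcases eq_or_lt_of_le (Nat.succ_le_of_lt (by omega : n - 1 < N)) with h | h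
  · rcases Nat.eq_or_lt_of_le (by omega : n ≤ N) with rfl | h2
    · exact h0
    · exact coeff_eq_zero_of_natDegree_lt (lt_of_le_of_lt hle h2)
  · exact coeff_eq_zero_of_natDegree_lt (by omega)

lemma natDegree_eq_of_coeff (f : ℤ[X]) (n : ℕ) (hle : f.natDegree ≤ n) (h0 : f.coeff n ≠ 0) :
    f.natDegree = n ∧ f.leadingCoeff = f.coeff n := by
  have := le_natDegree_of_ne_zero h0
  have hd : f.natDegree = n := le_antisymm hle this
  exact ⟨hd, by rw [← hd, coeff_natDegree]⟩

lemma natDegree_taylor_sub_le (f g : ℤ[X]) (r : ℤ) (m : ℕ)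
    (hf : f.natDegree ≤ m + 1) (hfg : (f - g).natDegree ≤ m) :
    (taylor r f - g).natDegree ≤ m := by
  rw [natDegree_le_iff_coeff_eq_zero]
  intro N hN
  rw [coeff_sub, coeff_taylor_of_le f r N (by omega), ← coeff_sub]
  exact coeff_eq_zero_of_natDegree_lt (by omega)

lemma W (p₁ u : ℤ[X]) (hd : 1 ≤ p₁.natDegree) (hu : u.natDegree ≤ p₁.natDegree)
    (hcd : u.coeff p₁.natDegree = p₁.leadingCoeff) (r : ℤ)
    (hne : (p₁.natDegree : ℤ) * p₁.leadingCoeff * r +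
      (p₁.coeff (p₁.natDegree - 1) - u.coeff (p₁.natDegree - 1)) ≠ 0) :
    (taylor r p₁ - u).natDegree = p₁.natDegree - 1 := by
  set d := p₁.natDegree with hdd
  have hled : (taylor r p₁ - u).natDegree ≤ d - 1 := by
    apply natDegree_le_pred' _ d
    · exact le_trans (natDegree_sub_le _ _) (by rw [natDegree_taylor]; omega)
    · rw [coeff_sub, coeff_taylor_of_le p₁ r d le_rfl, coeff_natDegree, hcd, sub_self]
  have hco : (taylor r p₁ - u).coeff (d - 1) ≠ 0 := by
    rw [coeff_sub, coeff_taylor_pred p₁ r hd]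
    intro h
    apply hne
    linarith
  exact le_antisymm hled (le_natDegree_of_ne_zero hco)

lemma sub1 (u p : ℤ[X]) (j : ℕ) (hj : p.natDegree < j) (hdeg : (u - p).natDegree = j) :
    u.natDegree = j ∧ (u - p).leadingCoeff = u.leadingCoeff := by
  by_cases hc : p.natDegree < u.natDegree
  · have h2 := natDegree_sub_lc u p hc
    exact ⟨by omega, h2.2⟩
  · exfalso
    have : (u - p).natDegree ≤ max u.natDegree p.natDegree := natDegree_sub_le u p
    omega

lemma A1_vdc_high (p q : ℤ[X]) (h : ℕ) (F : PolyPairFamily) (j : ℕ) (hj : p.natDegree < j) :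
    A1 (vdcOp p q h F) j = A1 F j := by
  ext x
  simp only [mem_A1]
  constructor
  · rintro ⟨pq', hmem, hdeg, hlc⟩
    obtain ⟨⟨pq, hpqF, hshape⟩, -⟩ := (mem_vdcOp p q h F pq').mp hmem
    rcases hshape with rfl | rfl
    · simp only at hdeg hlc
      have := sub1 (taylor (h:ℤ) pq.1) p j hj hdeg
      rw [natDegree_taylor] at this
      refine ⟨pq, hpqF, this.1, ?_⟩
      rw [← hlc, this.2]
      rw [taylor_apply, leadingCoeff_comp (by rw [natDegree_X_add_C]; exact one_ne_zero),
        leadingCoeff_X_add_C, one_pow, mul_one]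
    · simp only at hdeg hlc
      have := sub1 pq.1 p j hj hdeg
      exact ⟨pq, hpqF, this.1, by rw [← hlc, this.2]⟩
  · rintro ⟨pq, hpqF, hdeg, hlc⟩
    refine ⟨(pq.1 - p, pq.2 - q), ?_, ?_, ?_⟩
    · rw [mem_vdcOp]
      refine ⟨⟨pq, hpqF, Or.inr rfl⟩, ?_⟩
      have : (pq.1 - p).natDegree = pq.1.natDegree := natDegree_sub_eq_left_of_natDegree_lt (by omega)
      simp only
      omega
    · simpa using (natDegree_sub_lc pq.1 p (by omega)).1.trans hdeg
    · simpa [hdeg] using (natDegree_sub_lc pq.1 p (by omega)).2.trans hlc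

lemma A1_vdc_min (p q : ℤ[X]) (h : ℕ) (F : PolyPairFamily) (e : ℕ) (he : 1 ≤ e)
    (hp : p.natDegree = e) (hmin : ∀ pq ∈ F, e ≤ pq.1.natDegree) :
    A1 (vdcOp p q h F) e =
      ((A1 F e).erase p.leadingCoeff).image (fun x => x - p.leadingCoeff) := by
  have key : ∀ (u : ℤ[X]), u.natDegree = e → u.leadingCoeff ≠ p.leadingCoeff →
      (u - p).natDegree = e ∧ (u - p).leadingCoeff = u.leadingCoeff - p.leadingCoeff := by
    intro u hu hne
    have hco : (u - p).coeff e = u.leadingCoeff - p.leadingCoeff := by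
      rw [coeff_sub, ← hu, coeff_natDegree, hu, ← hp, coeff_natDegree]
    have hle : (u - p).natDegree ≤ e :=
      le_trans (natDegree_sub_le _ _) (by omega)
    have := natDegree_eq_of_coeff (u - p) e hle (by rw [hco]; exact sub_ne_zero.mpr hne)
    exact ⟨this.1, by rw [this.2, hco]⟩
  have keyz : ∀ (u : ℤ[X]), u.natDegree = e → u.leadingCoeff = p.leadingCoeff →
      (u - p).natDegree < e := by
    intro u hu heq
    have hco : (u - p).coeff e = 0 := by
      rw [coeff_sub, ← hu, coeff_natDegree, hu, ← hp, coeff_natDegree, heq, sub_self]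
    have hle : (u - p).natDegree ≤ e := le_trans (natDegree_sub_le _ _) (by omega)
    have := natDegree_le_pred' (u - p) e hle hco
    omega
  ext x
  simp only [mem_A1, Finset.mem_image, Finset.mem_erase]
  constructor
  · rintro ⟨pq', hmem, hdeg, hlc⟩
    obtain ⟨⟨pq, hpqF, hshape⟩, -⟩ := (mem_vdcOp p q h F pq').mp hmem
    have hmet := hmin pq hpqF
    have main : ∀ (u : ℤ[X]), u.natDegree = pq.1.natDegree →
        u.leadingCoeff = pq.1.leadingCoeff → (u - p).natDegree = e →
        (u - p).leadingCoeff = x →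
        ∃ b, (b ≠ p.leadingCoeff ∧ ∃ pq ∈ F, pq.1.natDegree = e ∧ pq.1.leadingCoeff = b) ∧
          b - p.leadingCoeff = x := by
      intro u hudeg hulc hd hl
      have hue : u.natDegree = e := by
        by_contra hne
        have hgt : e < u.natDegree := by omega
        have := (natDegree_sub_lc u p (by omega)).1
        omega
      have hbne : u.leadingCoeff ≠ p.leadingCoeff := by
        intro heq
        have := keyz u hue heq
        omega
      have := key u hue hbne
      refine ⟨u.leadingCoeff, ⟨hbne, pq, hpqF, by omega, hulc.symm⟩, by rw [← hl, this.2]⟩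
    rcases hshape with rfl | rfl
    · simp only at hdeg hlc
      exact main (taylor (h:ℤ) pq.1) (natDegree_taylor _ _) (by
        rw [taylor_apply, leadingCoeff_comp (by rw [natDegree_X_add_C]; exact one_ne_zero),
          leadingCoeff_X_add_C, one_pow, mul_one]) hdeg hlc
    · simp only at hdeg hlc
      exact main pq.1 rfl rfl hdeg hlc
  · rintro ⟨b, ⟨hbne, pq, hpqF, hdeg, hlc⟩, rfl⟩
    have := key pq.1 hdeg (by rw [hlc]; exact hbne)
    refine ⟨(pq.1 - p, pq.2 - q), ?_, this.1, by rw [this.2, hlc]⟩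
    rw [mem_vdcOp]
    refine ⟨⟨pq, hpqF, Or.inr rfl⟩, ?_⟩
    simp only
    omega

lemma lc_taylor (r : ℤ) (u : ℤ[X]) : (taylor r u).leadingCoeff = u.leadingCoeff := by
  rw [taylor_apply, leadingCoeff_comp (by rw [natDegree_X_add_C]; exact one_ne_zero),
    leadingCoeff_X_add_C, one_pow, mul_one]

lemma first_const (p u : ℤ[X]) (hp : p.natDegree = 0) (hu : u.natDegree = 0) :
    (u - p).natDegree = 0 := by
  have := natDegree_sub_le u p
  omega

lemma first_nonconst (p u : ℤ[X]) (hp : p.natDegree = 0) (hu : u.natDegree ≠ 0)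
    (v : ℤ[X]) (hv : v.natDegree = u.natDegree) : (v - p).natDegree ≠ 0 := by
  have := (natDegree_sub_lc v p (by omega)).1
  omega

lemma A2_vdc_high (p q : ℤ[X]) (h : ℕ) (F : PolyPairFamily) (j : ℕ)
    (hp : p.natDegree = 0) (hj : q.natDegree < j) :
    A2 (vdcOp p q h F) j = A2 F j := by
  ext x
  simp only [mem_A2]
  constructor
  · rintro ⟨pq', hmem, hd1, hd2, hlc⟩
    obtain ⟨⟨pq, hpqF, hshape⟩, -⟩ := (mem_vdcOp p q h F pq').mp hmem
    have h1 : pq.1.natDegree = 0 := by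
      by_contra hne
      rcases hshape with rfl | rfl
      · exact first_nonconst p pq.1 hp hne (taylor (h:ℤ) pq.1) (natDegree_taylor _ _)
          (by simpa using hd1)
      · exact first_nonconst p pq.1 hp hne pq.1 rfl (by simpa using hd1)
    rcases hshape with rfl | rfl
    · simp only at hd2 hlc
      have := sub1 (taylor (h:ℤ) pq.2) q j hj hd2
      rw [natDegree_taylor] at this
      exact ⟨pq, hpqF, h1, this.1, by rw [← hlc, this.2, lc_taylor]⟩
    · simp only at hd2 hlc
      have := sub1 pq.2 q j hj hd2
      exact ⟨pq, hpqF, h1, this.1, by rw [← hlc, this.2]⟩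
  · rintro ⟨pq, hpqF, hd1, hd2, hlc⟩
    have hs := natDegree_sub_lc pq.2 q (by omega)
    refine ⟨(pq.1 - p, pq.2 - q), ?_, first_const p pq.1 hp hd1, by simpa using hs.1.trans hd2,
      by simpa using hs.2.trans hlc⟩
    rw [mem_vdcOp]
    refine ⟨⟨pq, hpqF, Or.inr rfl⟩, ?_⟩
    simp only
    omega

lemma A2_vdc_min (p q : ℤ[X]) (h : ℕ) (F : PolyPairFamily) (f : ℕ) (hf : 1 ≤ f)
    (hp : p.natDegree = 0) (hq : q.natDegree = f)
    (hmin : ∀ pq ∈ F, pq.1.natDegree = 0 → f ≤ pq.2.natDegree) :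
    A2 (vdcOp p q h F) f =
      ((A2 F f).erase q.leadingCoeff).image (fun x => x - q.leadingCoeff) := by
  have key : ∀ (u : ℤ[X]), u.natDegree = f → u.leadingCoeff ≠ q.leadingCoeff →
      (u - q).natDegree = f ∧ (u - q).leadingCoeff = u.leadingCoeff - q.leadingCoeff := by
    intro u hu hne
    have hco : (u - q).coeff f = u.leadingCoeff - q.leadingCoeff := by
      rw [coeff_sub, ← hu, coeff_natDegree, hu, ← hq, coeff_natDegree]
    have hle : (u - q).natDegree ≤ f := le_trans (natDegree_sub_le _ _) (by omega)
    have := natDegree_eq_of_coeff (u - q) f hle (by rw [hco]; exact sub_ne_zero.mpr hne)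
    exact ⟨this.1, by rw [this.2, hco]⟩
  have keyz : ∀ (u : ℤ[X]), u.natDegree = f → u.leadingCoeff = q.leadingCoeff →
      (u - q).natDegree < f := by
    intro u hu heq
    have hco : (u - q).coeff f = 0 := by
      rw [coeff_sub, ← hu, coeff_natDegree, hu, ← hq, coeff_natDegree, heq, sub_self]
    have hle : (u - q).natDegree ≤ f := le_trans (natDegree_sub_le _ _) (by omega)
    have := natDegree_le_pred' (u - q) f hle hco
    omega
  ext x
  simp only [mem_A2, Finset.mem_image, Finset.mem_erase]
  constructor
  · rintro ⟨pq', hmem, hd1, hd2, hlc⟩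
    obtain ⟨⟨pq, hpqF, hshape⟩, -⟩ := (mem_vdcOp p q h F pq').mp hmem
    have h1 : pq.1.natDegree = 0 := by
      by_contra hne
      rcases hshape with rfl | rfl
      · exact first_nonconst p pq.1 hp hne (taylor (h:ℤ) pq.1) (natDegree_taylor _ _)
          (by simpa using hd1)
      · exact first_nonconst p pq.1 hp hne pq.1 rfl (by simpa using hd1)
    have hmet := hmin pq hpqF h1
    have main : ∀ (u : ℤ[X]), u.natDegree = pq.2.natDegree →
        u.leadingCoeff = pq.2.leadingCoeff → (u - q).natDegree = f →
        (u - q).leadingCoeff = x →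
        ∃ b, (b ≠ q.leadingCoeff ∧ ∃ pq ∈ F, pq.1.natDegree = 0 ∧ pq.2.natDegree = f ∧
          pq.2.leadingCoeff = b) ∧ b - q.leadingCoeff = x := by
      intro u hudeg hulc hd hl
      have hue : u.natDegree = f := by
        by_contra hne
        have hgt : f < u.natDegree := by omega
        have := (natDegree_sub_lc u q (by omega)).1
        omega
      have hbne : u.leadingCoeff ≠ q.leadingCoeff := by
        intro heq
        have := keyz u hue heq
        omega
      have := key u hue hbne
      refine ⟨u.leadingCoeff, ⟨hbne, pq, hpqF, h1, by omega, hulc.symm⟩, by rw [← hl, this.2]⟩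
    rcases hshape with rfl | rfl
    · simp only at hd2 hlc
      exact main (taylor (h:ℤ) pq.2) (natDegree_taylor _ _) (lc_taylor _ _) hd2 hlc
    · simp only at hd2 hlc
      exact main pq.2 rfl rfl hd2 hlc
  · rintro ⟨b, ⟨hbne, pq, hpqF, hd1, hd2, hlc⟩, rfl⟩
    have := key pq.2 hd2 (by rw [hlc]; exact hbne)
    refine ⟨(pq.1 - p, pq.2 - q), ?_, first_const p pq.1 hp hd1, this.1, by rw [this.2, hlc]⟩
    rw [mem_vdcOp]
    refine ⟨⟨pq, hpqF, Or.inr rfl⟩, ?_⟩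
    simp only
    omega

lemma card_erase_image_lt (A : Finset ℤ) (c : ℤ) (hc : c ∈ A) :
    (((A.erase c)).image (fun x => x - c)).card < A.card := by
  rw [Finset.card_image_of_injective _ (fun a b hab => by
    have : a - c = b - c := hab
    linarith), Finset.card_erase_of_mem hc]
  have : 0 < A.card := Finset.card_pos.mpr ⟨c, hc⟩
  omega

lemma lex_append (P : List ℕ) (x y : ℕ) (T T' : List ℕ) (hxy : x < y) :
    List.Lex (· < ·) (P ++ x :: T) (P ++ y :: T') := by
  induction P with
  | nil => exact List.Lex.rel hxy
  | cons a P ih => exact List.Lex.cons ih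

lemma range_map_split (f : ℕ → ℕ) (n k : ℕ) (hk : k < n) :
    ∃ T, (List.range n).map f = (List.range k).map f ++ (f k :: T) := by
  have h1 : n = k + (1 + (n - k - 1)) := by omega
  refine ⟨((List.range (n - k - 1)).map fun i => f (k + (1 + i))), ?_⟩
  conv_lhs => rw [h1]
  rw [List.range_add, List.map_append]
  congr 1
  rw [List.range_add]
  have : List.range 1 = [0] := rfl
  simp [Function.comp_def, this]

noncomputable def bigH (p₁ : ℤ[X]) (F : PolyPairFamily) : ℕ :=
  1 + (F.map fun pq =>
    (p₁.coeff (p₁.natDegree - 1) - pq.1.coeff (p₁.natDegree - 1)).natAbs).foldr max 0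

lemma bigH_spec (p₁ : ℤ[X]) (F : PolyPairFamily) (pq : ℤ[X] × ℤ[X]) (hpq : pq ∈ F)
    (h : ℕ) (hh : bigH p₁ F ≤ h) (ha : p₁.leadingCoeff ≠ 0) (hd : 1 ≤ p₁.natDegree) :
    (p₁.natDegree : ℤ) * p₁.leadingCoeff * (h : ℤ) +
      (p₁.coeff (p₁.natDegree - 1) - pq.1.coeff (p₁.natDegree - 1)) ≠ 0 := by
  set k := p₁.coeff (p₁.natDegree - 1) - pq.1.coeff (p₁.natDegree - 1) with hk
  have hmem := le_foldr_max
    (F.map fun pq => (p₁.coeff (p₁.natDegree - 1) - pq.1.coeff (p₁.natDegree - 1)).natAbs)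
    k.natAbs (List.mem_map.mpr ⟨pq, hpq, rfl⟩)
  have hkh : k.natAbs < h := by
    rw [bigH] at hh
    omega
  intro heq
  have heq2 : (p₁.natDegree : ℤ) * p₁.leadingCoeff * (h : ℤ) = -k := by linarith
  have hnat : ((p₁.natDegree : ℤ) * p₁.leadingCoeff * (h : ℤ)).natAbs =
      p₁.natDegree * p₁.leadingCoeff.natAbs * h := by
    simp [Int.natAbs_mul]
  have h1 : 1 ≤ p₁.leadingCoeff.natAbs := Int.natAbs_pos.mpr ha
  have h2 : h ≤ p₁.natDegree * p₁.leadingCoeff.natAbs * h := by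
    calc h = 1 * 1 * h := by ring
    _ ≤ p₁.natDegree * p₁.leadingCoeff.natAbs * h :=
      Nat.mul_le_mul (Nat.mul_le_mul hd h1) le_rfl
  rw [heq2, Int.natAbs_neg] at hnat
  omega

lemma nice_case_one (F : PolyPairFamily) (p₁ q₁ : ℤ[X]) (rest : PolyPairFamily)
    (hF : F = (p₁, q₁) :: rest)
    (h1 : ∀ pq ∈ F, pq.1.natDegree ≤ p₁.natDegree)
    (h2 : ∀ pq ∈ F, pq.2.natDegree < p₁.natDegree)
    (h3 : ∀ pq ∈ rest, (q₁ - pq.2).natDegree < (p₁ - pq.1).natDegree)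
    (hd2 : 2 ≤ p₁.natDegree)
    (p q : ℤ[X]) (hpqF : (p, q) ∈ F)
    (hpa : p.coeff p₁.natDegree ≠ p₁.leadingCoeff)
    (h : ℕ) (hh : bigH p₁ F ≤ h) :
    NiceFamily (vdcOp p q h F) := by
  have hp₁ne : p₁ ≠ 0 := fun e => by simp [e] at hd2
  have ha : p₁.leadingCoeff ≠ 0 := leadingCoeff_ne_zero.mpr hp₁ne
  have hmem1 : (p₁, q₁) ∈ F := hF ▸ List.mem_cons_self
  have hpd : p.natDegree ≤ p₁.natDegree := h1 (p, q) hpqF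
  have hqd : q.natDegree < p₁.natDegree := h2 (p, q) hpqF
  -- head degree
  have hheadle : (taylor (h:ℤ) p₁ - p).natDegree ≤ p₁.natDegree :=
    le_trans (natDegree_sub_le _ _) (by rw [natDegree_taylor]; omega)
  have hheadco : (taylor (h:ℤ) p₁ - p).coeff p₁.natDegree ≠ 0 := by
    rw [coeff_sub, coeff_taylor_of_le p₁ _ _ le_rfl, coeff_natDegree]
    exact sub_ne_zero.mpr (Ne.symm hpa)
  have hhead : (taylor (h:ℤ) p₁ - p).natDegree = p₁.natDegree :=
    (natDegree_eq_of_coeff _ _ hheadle hheadco).1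
  -- decomposition
  have hdecomp : vdcOp p q h F = (taylor (h:ℤ) p₁ - p, taylor (h:ℤ) q₁ - q) ::
      ((rest.map (fun pq => (polyShift h pq.1 - p, polyShift h pq.2 - q)) ++
        F.map (fun pq => (pq.1 - p, pq.2 - q))).filter
        (fun pq => !(pq.1.natDegree == 0 && pq.2.natDegree == 0))) := by
    conv_lhs => rw [vdcOp, hF, List.map_cons, List.cons_append]
    rw [List.filter_cons_of_pos, polyShift_eq, polyShift_eq]
    · rw [← hF]
    · simp only [polyShift_eq, Bool.not_eq_true', Bool.and_eq_false_iff]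
      left
      simp only [beq_eq_false_iff_ne, ne_eq]
      rw [hhead]
      omega
  refine ⟨_, _, _, hdecomp, ?_, ?_, ?_⟩
  · -- condition (1)
    intro pq' hmem'
    obtain ⟨⟨pq, hpq, hshape⟩, -⟩ := (mem_vdcOp p q h F pq').mp hmem'
    rcases hshape with rfl | rfl
    · show (taylor (h:ℤ) pq.1 - p).natDegree ≤ (taylor (h:ℤ) p₁ - p).natDegree
      rw [hhead]
      exact le_trans (natDegree_sub_le _ _)
        (max_le (by rw [natDegree_taylor]; exact h1 pq hpq) (by omega))
    · show (pq.1 - p).natDegree ≤ (taylor (h:ℤ) p₁ - p).natDegree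
      rw [hhead]
      exact le_trans (natDegree_sub_le _ _) (max_le (h1 pq hpq) (by omega))
  · -- condition (2)
    intro pq' hmem'
    obtain ⟨⟨pq, hpq, hshape⟩, -⟩ := (mem_vdcOp p q h F pq').mp hmem'
    have hq2 := h2 pq hpq
    rcases hshape with rfl | rfl
    · show (taylor (h:ℤ) pq.2 - q).natDegree < (taylor (h:ℤ) p₁ - p).natDegree
      rw [hhead]
      have : (taylor (h:ℤ) pq.2 - q).natDegree ≤ max pq.2.natDegree q.natDegree := by
        refine le_trans (natDegree_sub_le _ _) ?_
        rw [natDegree_taylor]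
      rcases max_cases pq.2.natDegree q.natDegree with ⟨he, -⟩ | ⟨he, -⟩ <;> omega
    · show (pq.2 - q).natDegree < (taylor (h:ℤ) p₁ - p).natDegree
      rw [hhead]
      have : (pq.2 - q).natDegree ≤ max pq.2.natDegree q.natDegree := natDegree_sub_le _ _
      rcases max_cases pq.2.natDegree q.natDegree with ⟨he, -⟩ | ⟨he, -⟩ <;> omega
  · -- condition (3)
    intro pq' hmem'
    rw [List.mem_filter] at hmem'
    rcases List.mem_append.mp hmem'.1 with hm | hm
    · obtain ⟨pq, hpq, rfl⟩ := List.mem_map.mp hm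
      simp only [polyShift_eq]
      have e1 : (taylor (h:ℤ) p₁ - p) - (taylor (h:ℤ) pq.1 - p) = taylor (h:ℤ) (p₁ - pq.1) := by
        rw [map_sub]; ring
      have e2 : (taylor (h:ℤ) q₁ - q) - (taylor (h:ℤ) pq.2 - q) = taylor (h:ℤ) (q₁ - pq.2) := by
        rw [map_sub]; ring
      rw [e1, e2, natDegree_taylor, natDegree_taylor]
      exact h3 pq hpq
    · obtain ⟨pq, hpq, rfl⟩ := List.mem_map.mp hm
      simp only
      have e1 : (taylor (h:ℤ) p₁ - p) - (pq.1 - p) = taylor (h:ℤ) p₁ - pq.1 := by ring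
      have e2 : (taylor (h:ℤ) q₁ - q) - (pq.2 - q) = taylor (h:ℤ) q₁ - pq.2 := by ring
      rw [e1, e2]
      by_cases hcd : pq.1.coeff p₁.natDegree = p₁.leadingCoeff
      · have hrhs : (taylor (h:ℤ) p₁ - pq.1).natDegree = p₁.natDegree - 1 :=
          W p₁ pq.1 (by omega) (h1 pq hpq) hcd (h : ℤ)
            (bigH_spec p₁ F pq hpq h hh ha (by omega))
        have hq1q : (q₁ - pq.2).natDegree ≤ p₁.natDegree - 2 := by
          rw [hF] at hpq
          rcases List.mem_cons.mp hpq with rfl | hpqrest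
          · simp only [sub_self, natDegree_zero]
            omega
          · have h3' := h3 pq hpqrest
            have hup : (p₁ - pq.1).natDegree ≤ p₁.natDegree - 1 := by
              refine natDegree_le_pred' _ p₁.natDegree
                (le_trans (natDegree_sub_le _ _) (max_le le_rfl (h1 pq (hF ▸ hpq)))) ?_
              rw [coeff_sub, coeff_natDegree, hcd, sub_self]
            omega
        have hlhs : (taylor (h:ℤ) q₁ - pq.2).natDegree ≤ p₁.natDegree - 2 := by
          refine natDegree_taylor_sub_le q₁ pq.2 _ _ ?_ hq1q
          have := h2 (p₁, q₁) hmem1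
          simp only at this
          omega
        omega
      · have hle : (taylor (h:ℤ) p₁ - pq.1).natDegree ≤ p₁.natDegree :=
          le_trans (natDegree_sub_le _ _)
            (max_le (by rw [natDegree_taylor]) (h1 pq hpq))
        have hco : (taylor (h:ℤ) p₁ - pq.1).coeff p₁.natDegree ≠ 0 := by
          rw [coeff_sub, coeff_taylor_of_le p₁ _ _ le_rfl, coeff_natDegree]
          exact sub_ne_zero.mpr (Ne.symm hcd)
        have hrhs := (natDegree_eq_of_coeff _ _ hle hco).1
        have hq1 : q₁.natDegree < p₁.natDegree := by
          have := h2 (p₁, q₁) hmem1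
          simpa using this
        have hlhs : (taylor (h:ℤ) q₁ - pq.2).natDegree ≤ p₁.natDegree - 1 := by
          refine le_trans (natDegree_sub_le _ _) ?_
          rw [natDegree_taylor]
          have := h2 pq hpq
          omega
        omega

lemma nice_case_two (F : PolyPairFamily) (p₁ q₁ : ℤ[X]) (rest : PolyPairFamily)
    (hF : F = (p₁, q₁) :: rest)
    (h1 : ∀ pq ∈ F, pq.1.natDegree ≤ p₁.natDegree)
    (h2 : ∀ pq ∈ F, pq.2.natDegree < p₁.natDegree)
    (h3 : ∀ pq ∈ rest, (q₁ - pq.2).natDegree < (p₁ - pq.1).natDegree)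
    (hd2 : 2 ≤ p₁.natDegree)
    (hall : ∀ pq ∈ F, pq.1.coeff p₁.natDegree = p₁.leadingCoeff)
    (h : ℕ) (hh : bigH p₁ F ≤ h) :
    NiceFamily (vdcOp p₁ q₁ h F) := by
  have hp₁ne : p₁ ≠ 0 := fun e => by simp [e] at hd2
  have ha : p₁.leadingCoeff ≠ 0 := leadingCoeff_ne_zero.mpr hp₁ne
  have hmem1 : (p₁, q₁) ∈ F := hF ▸ List.mem_cons_self
  have hq1d : q₁.natDegree < p₁.natDegree := by simpa using h2 (p₁, q₁) hmem1
  -- key degree bounds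
  have hsubp : ∀ pq ∈ F, (pq.1 - p₁).natDegree ≤ p₁.natDegree - 1 := by
    intro pq hpq
    refine natDegree_le_pred' _ p₁.natDegree
      (le_trans (natDegree_sub_le _ _) (max_le (h1 pq hpq) le_rfl)) ?_
    rw [coeff_sub, hall pq hpq, coeff_natDegree, sub_self]
  have hsubp' : ∀ pq ∈ F, (p₁ - pq.1).natDegree ≤ p₁.natDegree - 1 := by
    intro pq hpq
    have : p₁ - pq.1 = -(pq.1 - p₁) := by ring
    rw [this, natDegree_neg]
    exact hsubp pq hpq
  have hsubq : ∀ pq ∈ F, (q₁ - pq.2).natDegree ≤ p₁.natDegree - 2 := by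
    intro pq hpq
    rw [hF] at hpq
    rcases List.mem_cons.mp hpq with rfl | hpqrest
    · simp only [sub_self, natDegree_zero]
      omega
    · have h3' := h3 pq hpqrest
      have := hsubp' pq (hF ▸ hpq)
      omega
  have hsubq' : ∀ pq ∈ F, (pq.2 - q₁).natDegree ≤ p₁.natDegree - 2 := by
    intro pq hpq
    have : pq.2 - q₁ = -(q₁ - pq.2) := by ring
    rw [this, natDegree_neg]
    exact hsubq pq hpq
  have hWa : ∀ pq ∈ F, (taylor (h:ℤ) p₁ - pq.1).natDegree = p₁.natDegree - 1 := by
    intro pq hpq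
    exact W p₁ pq.1 (by omega) (h1 pq hpq) (hall pq hpq) (h : ℤ)
      (bigH_spec p₁ F pq hpq h hh ha (by omega))
  have hhead : (taylor (h:ℤ) p₁ - p₁).natDegree = p₁.natDegree - 1 := hWa (p₁, q₁) hmem1
  have hdecomp : vdcOp p₁ q₁ h F = (taylor (h:ℤ) p₁ - p₁, taylor (h:ℤ) q₁ - q₁) ::
      ((rest.map (fun pq => (polyShift h pq.1 - p₁, polyShift h pq.2 - q₁)) ++
        F.map (fun pq => (pq.1 - p₁, pq.2 - q₁))).filter
        (fun pq => !(pq.1.natDegree == 0 && pq.2.natDegree == 0))) := by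
    conv_lhs => rw [vdcOp, hF, List.map_cons, List.cons_append]
    rw [List.filter_cons_of_pos, polyShift_eq, polyShift_eq]
    · rw [← hF]
    · simp only [polyShift_eq, Bool.not_eq_true', Bool.and_eq_false_iff]
      left
      simp only [beq_eq_false_iff_ne, ne_eq]
      rw [hhead]
      omega
  refine ⟨_, _, _, hdecomp, ?_, ?_, ?_⟩
  · -- condition (1)
    intro pq' hmem'
    obtain ⟨⟨pq, hpq, hshape⟩, -⟩ := (mem_vdcOp p₁ q₁ h F pq').mp hmem'
    rcases hshape with rfl | rfl
    · show (taylor (h:ℤ) pq.1 - p₁).natDegree ≤ (taylor (h:ℤ) p₁ - p₁).natDegree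
      rw [hhead]
      exact natDegree_taylor_sub_le pq.1 p₁ _ _ (by have := h1 pq hpq; omega) (hsubp pq hpq)
    · show (pq.1 - p₁).natDegree ≤ (taylor (h:ℤ) p₁ - p₁).natDegree
      rw [hhead]
      exact hsubp pq hpq
  · -- condition (2)
    intro pq' hmem'
    obtain ⟨⟨pq, hpq, hshape⟩, -⟩ := (mem_vdcOp p₁ q₁ h F pq').mp hmem'
    rcases hshape with rfl | rfl
    · show (taylor (h:ℤ) pq.2 - q₁).natDegree < (taylor (h:ℤ) p₁ - p₁).natDegree
      rw [hhead]
      have : (taylor (h:ℤ) pq.2 - q₁).natDegree ≤ p₁.natDegree - 2 :=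
        natDegree_taylor_sub_le pq.2 q₁ _ _ (by have := h2 pq hpq; omega) (hsubq' pq hpq)
      omega
    · show (pq.2 - q₁).natDegree < (taylor (h:ℤ) p₁ - p₁).natDegree
      rw [hhead]
      have := hsubq' pq hpq
      omega
  · -- condition (3)
    intro pq' hmem'
    rw [List.mem_filter] at hmem'
    rcases List.mem_append.mp hmem'.1 with hm | hm
    · obtain ⟨pq, hpq, rfl⟩ := List.mem_map.mp hm
      simp only [polyShift_eq]
      have e1 : (taylor (h:ℤ) p₁ - p₁) - (taylor (h:ℤ) pq.1 - p₁) = taylor (h:ℤ) (p₁ - pq.1) := by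
        rw [map_sub]; ring
      have e2 : (taylor (h:ℤ) q₁ - q₁) - (taylor (h:ℤ) pq.2 - q₁) = taylor (h:ℤ) (q₁ - pq.2) := by
        rw [map_sub]; ring
      rw [e1, e2, natDegree_taylor, natDegree_taylor]
      exact h3 pq hpq
    · obtain ⟨pq, hpq, rfl⟩ := List.mem_map.mp hm
      simp only
      have e1 : (taylor (h:ℤ) p₁ - p₁) - (pq.1 - p₁) = taylor (h:ℤ) p₁ - pq.1 := by ring
      have e2 : (taylor (h:ℤ) q₁ - q₁) - (pq.2 - q₁) = taylor (h:ℤ) q₁ - pq.2 := by ring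
      rw [e1, e2, hWa pq hpq]
      have : (taylor (h:ℤ) q₁ - pq.2).natDegree ≤ p₁.natDegree - 2 :=
        natDegree_taylor_sub_le q₁ pq.2 _ _ (by omega) (hsubq pq hpq)
      omega

lemma type_decrease_w1 (F : PolyPairFamily) (p q : ℤ[X]) (h : ℕ) (d e : ℕ)
    (he1 : 1 ≤ e) (hed : e ≤ d) (hd1 : 1 ≤ d)
    (hp : p.natDegree = e) (hmin : ∀ pq ∈ F, e ≤ pq.1.natDegree)
    (hcm : p.leadingCoeff ∈ A1 F e) :
    List.Lex (· < ·) (typeList d (vdcOp p q h F)) (typeList d F) := by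
  set F' := vdcOp p q h F with hF'
  have hw1eq : ∀ k ∈ List.range (d - e), w1 F' (d - k) = w1 F (d - k) := by
    intro k hk
    rw [List.mem_range] at hk
    rw [w1_eq_card, w1_eq_card, A1_vdc_high p q h F (d - k) (by omega)]
  have hlt : w1 F' e < w1 F e := by
    rw [w1_eq_card, w1_eq_card, A1_vdc_min p q h F e he1 hp hmin]
    exact card_erase_image_lt _ _ hcm
  obtain ⟨T, hT⟩ := range_map_split (fun k => w1 F' (d - k)) d (d - e) (by omega)
  obtain ⟨T2, hT2⟩ := range_map_split (fun k => w1 F (d - k)) d (d - e) (by omega)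
  rw [typeList, typeList, hT, hT2, List.map_congr_left hw1eq]
  have hdd : d - (d - e) = e := by omega
  rw [hdd, List.append_assoc, List.append_assoc, List.cons_append, List.cons_append]
  exact lex_append _ _ _ _ _ hlt

lemma type_decrease_w2 (F : PolyPairFamily) (p q : ℤ[X]) (h : ℕ) (d f : ℕ)
    (hf1 : 1 ≤ f) (hfd : f < d)
    (hp0 : p.natDegree = 0) (hq : q.natDegree = f)
    (hmin : ∀ pq ∈ F, pq.1.natDegree = 0 → f ≤ pq.2.natDegree)
    (hcm : q.leadingCoeff ∈ A2 F f) :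
    List.Lex (· < ·) (typeList d (vdcOp p q h F)) (typeList d F) := by
  set F' := vdcOp p q h F with hF'
  have hw1eq : ∀ k ∈ List.range d, w1 F' (d - k) = w1 F (d - k) := by
    intro k hk
    rw [List.mem_range] at hk
    rw [w1_eq_card, w1_eq_card, A1_vdc_high p q h F (d - k) (by omega)]
  have hw2eq : ∀ k ∈ List.range (d - f), w2 F' (d - k) = w2 F (d - k) := by
    intro k hk
    rw [List.mem_range] at hk
    rw [w2_eq_card, w2_eq_card, A2_vdc_high p q h F (d - k) hp0 (by omega)]
  have hlt : w2 F' f < w2 F f := by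
    rw [w2_eq_card, w2_eq_card, A2_vdc_min p q h F f hf1 hp0 hq hmin]
    exact card_erase_image_lt _ _ hcm
  obtain ⟨T, hT⟩ := range_map_split (fun k => w2 F' (d - k)) d (d - f) (by omega)
  obtain ⟨T2, hT2⟩ := range_map_split (fun k => w2 F (d - k)) d (d - f) (by omega)
  rw [typeList, typeList, hT, hT2, List.map_congr_left hw1eq, List.map_congr_left hw2eq]
  have hdd : d - (d - f) = f := by omega
  rw [hdd, ← List.append_assoc, ← List.append_assoc]
  exact lex_append _ _ _ _ _ hlt

/-- **Lemma 4.4.** For a nice family of pairs of polynomials with `deg p₁ ≥ 2`, there is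
a pair `(p,q)` in the family such that for all sufficiently large `h`, the family
`(p,q,h)-vdC(𝒫,𝒬)` is nice and has strictly smaller type. -/
theorem nice_family_vdc_reduction (F : PolyPairFamily)
    (hnoconst : ∀ pq ∈ F, ¬ IsConstPair pq)
    (hnice : NiceFamily F)
    (hdeg : 2 ≤ F.headI.1.natDegree) :
    ∃ pq ∈ F, ∃ h₀ : ℕ, ∀ h : ℕ, h₀ ≤ h →
      NiceFamily (vdcOp pq.1 pq.2 h F) ∧
      List.Lex (· < ·) (typeList (famDegree F) (vdcOp pq.1 pq.2 h F))
        (typeList (famDegree F) F) := by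
  classical
  obtain ⟨p₁, q₁, rest, hF, h1, h2, h3⟩ := hnice
  have hd2 : 2 ≤ p₁.natDegree := by rw [hF] at hdeg; exact hdeg
  have hp₁ne : p₁ ≠ 0 := fun e => by simp [e] at hd2
  have ha : p₁.leadingCoeff ≠ 0 := leadingCoeff_ne_zero.mpr hp₁ne
  have hmem1 : (p₁, q₁) ∈ F := hF ▸ List.mem_cons_self
  have hfd : famDegree F = p₁.natDegree := by
    apply le_antisymm
    · exact famDegree_le F _ (fun pq hpq => ⟨h1 pq hpq, le_of_lt (h2 pq hpq)⟩)
    · exact (le_famDegree F (p₁, q₁) hmem1).1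
  by_cases hC : ∃ pq ∈ F, pq.1.natDegree = 0
  · -- some pᵢ constant : use pair with constant first entry and minimal second degree
    have hex : ∃ n, ∃ pq ∈ F, pq.1.natDegree = 0 ∧ pq.2.natDegree = n := by
      obtain ⟨pq, hpq, h0⟩ := hC
      exact ⟨pq.2.natDegree, pq, hpq, h0, rfl⟩
    obtain ⟨pq₀, hpq₀F, hpq₀1, hpq₀2⟩ := Nat.find_spec hex
    set f := Nat.find hex with hfdef
    have hmin : ∀ pq ∈ F, pq.1.natDegree = 0 → f ≤ pq.2.natDegree := fun pq hpq h0 =>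
      Nat.find_min' hex ⟨pq, hpq, h0, rfl⟩
    have hf1 : 1 ≤ f := by
      have := hnoconst pq₀ hpq₀F
      rw [IsConstPair] at this
      omega
    have hfltd : f < p₁.natDegree := by
      have := h2 pq₀ hpq₀F
      omega
    refine ⟨pq₀, hpq₀F, bigH p₁ F, fun h hh => ⟨?_, ?_⟩⟩
    · exact nice_case_one F p₁ q₁ rest hF h1 h2 h3 hd2 pq₀.1 pq₀.2 (by simpa using hpq₀F)
        (by rw [coeff_eq_zero_of_natDegree_lt (by omega)]; exact fun e => ha e.symm) h hh
    · rw [hfd]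
      exact type_decrease_w2 F pq₀.1 pq₀.2 h p₁.natDegree f hf1 hfltd hpq₀1 hpq₀2 hmin
        ((mem_A2 F f _).mpr ⟨pq₀, hpq₀F, hpq₀1, hpq₀2, rfl⟩)
  · -- all pᵢ nonconstant
    push_neg at hC
    have hex : ∃ n, ∃ pq ∈ F, pq.1.natDegree = n := ⟨p₁.natDegree, (p₁, q₁), hmem1, rfl⟩
    obtain ⟨pqe, hpqeF, hpqe⟩ := Nat.find_spec hex
    set e := Nat.find hex with hedef
    have hmin : ∀ pq ∈ F, e ≤ pq.1.natDegree := fun pq hpq => Nat.find_min' hex ⟨pq, hpq, rfl⟩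
    have he1 : 1 ≤ e := by
      have := hC pqe hpqeF
      omega
    have hed : e ≤ p₁.natDegree := by
      have := Nat.find_min' hex ⟨(p₁, q₁), hmem1, rfl⟩
      exact this
    by_cases hx : ∃ pq ∈ F, pq.1.natDegree = e ∧ pq.1.coeff p₁.natDegree ≠ p₁.leadingCoeff
    · obtain ⟨pq₀, hpq₀F, hpq₀e, hpq₀c⟩ := hx
      refine ⟨pq₀, hpq₀F, bigH p₁ F, fun h hh => ⟨?_, ?_⟩⟩
      · exact nice_case_one F p₁ q₁ rest hF h1 h2 h3 hd2 pq₀.1 pq₀.2 (by simpa using hpq₀F)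
          hpq₀c h hh
      · rw [hfd]
        exact type_decrease_w1 F pq₀.1 pq₀.2 h p₁.natDegree e he1 hed (by omega) hpq₀e hmin
          ((mem_A1 F e _).mpr ⟨pq₀, hpq₀F, hpq₀e, rfl⟩)
    · push_neg at hx
      have heqd : e = p₁.natDegree := by
        have hco := hx pqe hpqeF hpqe
        have : p₁.natDegree ≤ pqe.1.natDegree := le_natDegree_of_ne_zero (by rw [hco]; exact ha)
        have := h1 pqe hpqeF
        omega
      have hcall : ∀ pq ∈ F, pq.1.coeff p₁.natDegree = p₁.leadingCoeff := by
        intro pq hpq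
        have hdq : pq.1.natDegree = e := le_antisymm (heqd ▸ h1 pq hpq) (hmin pq hpq)
        exact hx pq hpq hdq
      refine ⟨(p₁, q₁), hmem1, bigH p₁ F, fun h hh => ⟨?_, ?_⟩⟩
      · exact nice_case_two F p₁ q₁ rest hF h1 h2 h3 hd2 hcall h hh
      · rw [hfd]
        refine type_decrease_w1 F p₁ q₁ h p₁.natDegree e he1 hed (by omega) heqd.symm hmin ?_
        exact (mem_A1 F e _).mpr ⟨(p₁, q₁), hmem1, heqd.symm ▸ rfl, rfl⟩
end
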